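/- arXiv:2001.11408 — 9 statements merged into one kernel-verified Lean document; each statement's English description precedes it below -/
import Mathlib

section
/- Let d ≥ 2, let x₁, …, x_d be d points in a pseudometric space (X, dist), and let δ > 0. Then there exists a partition Π of the index set {1, …, d} such that: (i) whenever i and j belong to the same block of Π, dist(x_i, x_j) ≤ δ; and (ii) whenever i and j belong to different blocks of Π, dist(x_i, x_j) > δ/(d−1). -/
open Set

/-- Lemma (partition of points in a pseudometric space). -/
theorem empirical_tail_copulas_stmt2
    {X : Type*} [PseudoMetricSpace X] (d : ℕ) (hd : 2 ≤ d)
    (x : Fin d → X) (δ : ℝ) (hδ : 0 < δ) :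
    ∃ rel : Fin d → Fin d → Prop, Equivalence rel ∧
      ∀ i j : Fin d,
        (rel i j → dist (x i) (x j) ≤ δ) ∧
        (¬ rel i j → dist (x i) (x j) > δ / ((d : ℝ) - 1)) := by
  set ε : ℝ := δ / ((d : ℝ) - 1) with hε
  have hd1 : (1 : ℝ) ≤ (d : ℝ) - 1 := by
    have : (2 : ℝ) ≤ (d : ℝ) := by exact_mod_cast hd
    linarith
  have hd0 : (0 : ℝ) < (d : ℝ) - 1 := by linarith
  have hε0 : 0 < ε := div_pos hδ hd0
  let G : SimpleGraph (Fin d) :=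
    { Adj := fun i j => i ≠ j ∧ dist (x i) (x j) ≤ ε
      symm := by
        constructor; intro i j ⟨h1, h2⟩
        exact ⟨h1.symm, by rwa [dist_comm]⟩
      loopless := by constructor; intro i h; exact h.1 rfl }
  have key : ∀ {i j : Fin d} (p : G.Walk i j), dist (x i) (x j) ≤ p.length * ε := by
    intro i j p
    induction p with
    | nil => simp
    | cons h p ih =>
      calc dist (x _) (x _) ≤ dist (x _) (x _) + dist (x _) (x _) := dist_triangle _ _ _
        _ ≤ ε + p.length * ε := add_le_add h.2 ih
        _ = (p.length + 1) * ε := by ring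
        _ = _ := by push_cast [SimpleGraph.Walk.length_cons]; ring
  refine ⟨G.Reachable, ⟨fun i => SimpleGraph.Reachable.refl i,
    SimpleGraph.Reachable.symm, SimpleGraph.Reachable.trans⟩, fun i j => ⟨?_, ?_⟩⟩
  · intro hr
    obtain ⟨w⟩ := hr
    have hp : (w.toPath : G.Walk i j).length < Fintype.card (Fin d) :=
      SimpleGraph.Walk.IsPath.length_lt w.toPath.2
    have hlen : ((w.toPath : G.Walk i j).length : ℝ) ≤ (d : ℝ) - 1 := by
      rw [Fintype.card_fin] at hp
      have : (w.toPath : G.Walk i j).length ≤ d - 1 := Nat.le_sub_one_of_lt hp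
      have := (Nat.cast_le (α := ℝ)).2 this
      have hdn : ((d - 1 : ℕ) : ℝ) = (d : ℝ) - 1 := by
        have : 1 ≤ d := le_trans one_le_two hd
        push_cast [Nat.cast_sub this]; ring
      linarith [hdn ▸ this]
    calc dist (x i) (x j) ≤ (w.toPath : G.Walk i j).length * ε := key _
      _ ≤ ((d : ℝ) - 1) * ε := by
          exact mul_le_mul_of_nonneg_right hlen hε0.le
      _ = δ := by rw [hε]; field_simp [hd0.ne']
  · intro hnr
    by_contra hle
    push_neg at hle
    rcases eq_or_ne i j with rfl | hij
    · exact hnr (SimpleGraph.Reachable.refl i)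
    · exact hnr (SimpleGraph.Adj.reachable ⟨hij, hle⟩)
end

section
/- Let (Ω, 𝓕, P) be a probability space, T a nonempty set, and U : T → Ω → ℝ a family of random variables such that for every t ∈ T the random variable U(t) is uniformly distributed on the interval (0,1). Assume that for all s, t ∈ T and all x, y ∈ [0,∞) the bivariate tail-copula limit R_{(s,t)}(x,y) = lim_{u↓0} u⁻¹ P[U(s) ≤ u·x, U(t) ≤ u·y] exists. Define ρ₂((s,x),(t,y)) = (x − 2·R_{(s,t)}(x,y) + y)^{1/2}. Then for all s, t ∈ T and x, y ∈ [0,∞): [ρ₂((s,x),(t,y))]² = |x − y| + 2·( min(x,y) − R_{(s,t)}(x,y) ) ≤ |x − y| + 2·min(x,y)·(1 − R_{(s,t)}(1,1)). -/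
open MeasureTheory Filter Set Topology

/-- Lemma (expression and bound for the squared standard deviation semimetric). -/
theorem empirical_tail_copulas_stmt4
    {Ω : Type*} [MeasurableSpace Ω] (P : Measure Ω) [IsProbabilityMeasure P]
    {T : Type*} [Nonempty T] (U : T → Ω → ℝ)
    (hunif : ∀ t : T, ∀ x ∈ Icc (0:ℝ) 1, P {ω | U t ω ≤ x} = ENNReal.ofReal x)
    (R : T → T → ℝ → ℝ → ℝ)
    (hR : ∀ (s t : T) (x y : ℝ), 0 ≤ x → 0 ≤ y →
      Tendsto (fun u : ℝ => (P {ω | U s ω ≤ u * x ∧ U t ω ≤ u * y}).toReal / u)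
        (𝓝[>] (0:ℝ)) (𝓝 (R s t x y)))
    (s t : T) (x y : ℝ) (hx : 0 ≤ x) (hy : 0 ≤ y) :
    Real.sqrt (x - 2 * R s t x y + y) ^ 2
        = |x - y| + 2 * (min x y - R s t x y) ∧
      |x - y| + 2 * (min x y - R s t x y)
        ≤ |x - y| + 2 * min x y * (1 - R s t 1 1) := by
  -- R is nonnegative
  have hRnn : ∀ (a b : ℝ), 0 ≤ a → 0 ≤ b → 0 ≤ R s t a b := by
    intro a b ha hb
    refine ge_of_tendsto (hR s t a b ha hb) ?_
    filter_upwards [self_mem_nhdsWithin] with u hu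
    exact div_nonneg ENNReal.toReal_nonneg (le_of_lt hu)
  -- R s t a b ≤ a
  have hRx : ∀ (a b : ℝ), 0 ≤ a → 0 ≤ b → R s t a b ≤ a := by
    intro a b ha hb
    refine le_of_tendsto (hR s t a b ha hb) ?_
    have hmem : Ioo (0:ℝ) (1/(a+1)) ∈ 𝓝[>] (0:ℝ) :=
      Ioo_mem_nhdsGT_of_mem ⟨le_refl _, by positivity⟩
    filter_upwards [hmem] with u hu
    have hu0 : 0 < u := hu.1
    have h1 : u * (a + 1) < 1 := (lt_div_iff₀ (by positivity)).mp hu.2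
    have hua : u * a ∈ Icc (0:ℝ) 1 := ⟨by positivity, by nlinarith⟩
    have hle : P {ω | U s ω ≤ u*a ∧ U t ω ≤ u*b} ≤ P {ω | U s ω ≤ u*a} :=
      measure_mono (fun ω h => h.1)
    have h2 : (P {ω | U s ω ≤ u*a ∧ U t ω ≤ u*b}).toReal ≤ u * a := by
      calc (P {ω | U s ω ≤ u*a ∧ U t ω ≤ u*b}).toReal
          ≤ (P {ω | U s ω ≤ u*a}).toReal :=
            ENNReal.toReal_mono (measure_ne_top P _) hle
        _ = u * a := by rw [hunif s _ hua, ENNReal.toReal_ofReal (by positivity)]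
    rw [div_le_iff₀ hu0]
    linarith [h2]
  -- R s t a b ≤ b
  have hRy : ∀ (a b : ℝ), 0 ≤ a → 0 ≤ b → R s t a b ≤ b := by
    intro a b ha hb
    refine le_of_tendsto (hR s t a b ha hb) ?_
    have hmem : Ioo (0:ℝ) (1/(b+1)) ∈ 𝓝[>] (0:ℝ) :=
      Ioo_mem_nhdsGT_of_mem ⟨le_refl _, by positivity⟩
    filter_upwards [hmem] with u hu
    have hu0 : 0 < u := hu.1
    have h1 : u * (b + 1) < 1 := (lt_div_iff₀ (by positivity)).mp hu.2
    have hub : u * b ∈ Icc (0:ℝ) 1 := ⟨by positivity, by nlinarith⟩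
    have hle : P {ω | U s ω ≤ u*a ∧ U t ω ≤ u*b} ≤ P {ω | U t ω ≤ u*b} :=
      measure_mono (fun ω h => h.2)
    have h2 : (P {ω | U s ω ≤ u*a ∧ U t ω ≤ u*b}).toReal ≤ u * b := by
      calc (P {ω | U s ω ≤ u*a ∧ U t ω ≤ u*b}).toReal
          ≤ (P {ω | U t ω ≤ u*b}).toReal :=
            ENNReal.toReal_mono (measure_ne_top P _) hle
        _ = u * b := by rw [hunif t _ hub, ENNReal.toReal_ofReal (by positivity)]
    rw [div_le_iff₀ hu0]
    linarith [h2]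
  -- monotonicity
  have hmono : ∀ (a b : ℝ), 0 ≤ a → 0 ≤ b → a ≤ x → b ≤ y → R s t a b ≤ R s t x y := by
    intro a b ha hb hax hby
    refine le_of_tendsto_of_tendsto (hR s t a b ha hb) (hR s t x y hx hy) ?_
    filter_upwards [self_mem_nhdsWithin] with u hu
    have hu0 : (0:ℝ) < u := hu
    have hsub : {ω | U s ω ≤ u*a ∧ U t ω ≤ u*b} ⊆ {ω | U s ω ≤ u*x ∧ U t ω ≤ u*y} := by
      intro ω hω
      exact ⟨hω.1.trans (by nlinarith), hω.2.trans (by nlinarith)⟩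
    have := ENNReal.toReal_mono (measure_ne_top P _) (measure_mono hsub)
    exact div_le_div_of_nonneg_right this hu0.le |>.trans_eq rfl
  -- scaling: R s t c c = c * R s t 1 1 for c > 0
  have hscale : ∀ c : ℝ, 0 < c → R s t c c = c * R s t 1 1 := by
    intro c hc
    have hmap : Tendsto (fun u : ℝ => u * c) (𝓝[>] (0:ℝ)) (𝓝[>] (0:ℝ)) := by
      rw [tendsto_nhdsWithin_iff]
      constructor
      · have h0 : Tendsto (fun u : ℝ => u * c) (𝓝 (0:ℝ)) (𝓝 (0 * c)) :=
          tendsto_id.mul_const c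
        have h1 : Tendsto (fun u : ℝ => u * c) (𝓝[>] (0:ℝ)) (𝓝 (0 * c)) :=
          h0.mono_left nhdsWithin_le_nhds
        simpa using h1
      · filter_upwards [self_mem_nhdsWithin] with u hu
        exact mul_pos hu hc
    have hcomp := (hR s t 1 1 zero_le_one zero_le_one).comp hmap
    have hmul := hcomp.const_mul c
    have hcongr : Tendsto (fun u : ℝ => (P {ω | U s ω ≤ u*c ∧ U t ω ≤ u*c}).toReal / u)
        (𝓝[>] (0:ℝ)) (𝓝 (c * R s t 1 1)) := by
      refine hmul.congr' ?_ |>.mono_left le_rfl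
      filter_upwards [self_mem_nhdsWithin] with u hu
      have hu0 : (0:ℝ) < u := hu
      simp only [Function.comp]
      rw [mul_one]
      field_simp
    exact tendsto_nhds_unique (hR s t c c hc.le hc.le) hcongr
  -- min x y * R 1 1 ≤ R x y
  have hm : 0 ≤ min x y := le_min hx hy
  have hkey : min x y * R s t 1 1 ≤ R s t x y := by
    rcases eq_or_lt_of_le hm with h0 | h0
    · rw [← h0, zero_mul]
      exact hRnn x y hx hy
    · rw [← hscale _ h0]
      exact hmono _ _ hm hm (min_le_left x y) (min_le_right x y)
  have hRle : R s t x y ≤ min x y := le_min (hRx x y hx hy) (hRy x y hx hy)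
  have hnn : 0 ≤ x - 2 * R s t x y + y := by
    have h1 : min x y ≤ x := min_le_left x y
    have h2 : min x y ≤ y := min_le_right x y
    linarith
  constructor
  · rw [Real.sq_sqrt hnn]
    rcases le_total x y with h | h
    · rw [abs_of_nonpos (by linarith), min_eq_left h]; ring
    · rw [abs_of_nonneg (by linarith), min_eq_right h]; ring
  · nlinarith [hkey]
end

section
/- Let (Ω, 𝓕, P) be a probability space, T a nonempty set, and U : T → Ω → ℝ a family of random variables such that for every t ∈ T the random variable U(t) is uniformly distributed on the interval (0,1). Assume that for all s, t ∈ T and all x, y ∈ [0,∞) the bivariate tail-copula limit R_{(s,t)}(x,y) = lim_{u↓0} u⁻¹ P[U(s) ≤ u·x, U(t) ≤ u·y] exists, and define ρ₂((s,x),(t,y)) = (x − 2·R_{(s,t)}(x,y) + y)^{1/2}. Then for any sequence (s_n, x_n) in T × [0,∞) and any point (s, x) ∈ T × [0,∞): ρ₂((s_n,x_n),(s,x)) → 0 as n → ∞ if and only if [x_n → x and x·(R_{(s_n,s)}(1,1) − 1) → 0]. -/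
open MeasureTheory Filter Set Topology

section aux
variable {Ω : Type*} [MeasurableSpace Ω] {P : Measure Ω} [IsProbabilityMeasure P]
  {T : Type*} {U : T → Ω → ℝ} {R : T → T → ℝ → ℝ → ℝ}

/-- Monotonicity of the tail copula in both arguments. -/
lemma tc_mono
    (hR : ∀ (s t : T) (x y : ℝ), 0 ≤ x → 0 ≤ y →
      Tendsto (fun u : ℝ => (P {ω | U s ω ≤ u * x ∧ U t ω ≤ u * y}).toReal / u)
        (𝓝[>] (0:ℝ)) (𝓝 (R s t x y)))
    (s t : T) {x y x' y' : ℝ} (hx : 0 ≤ x) (hy : 0 ≤ y)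
    (hxx : x ≤ x') (hyy : y ≤ y') : R s t x y ≤ R s t x' y' := by
  refine le_of_tendsto_of_tendsto (hR s t x y hx hy)
    (hR s t x' y' (hx.trans hxx) (hy.trans hyy)) ?_
  filter_upwards [self_mem_nhdsWithin] with u hu
  have hu' : (0:ℝ) < u := hu
  have hsub : {ω | U s ω ≤ u * x ∧ U t ω ≤ u * y} ⊆
      {ω | U s ω ≤ u * x' ∧ U t ω ≤ u * y'} := by
    intro ω hω
    exact ⟨hω.1.trans (by nlinarith), hω.2.trans (by nlinarith)⟩
  have := ENNReal.toReal_mono (measure_ne_top P _) (measure_mono hsub)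
  gcongr

/-- The tail copula is nonnegative. -/
lemma tc_nonneg
    (hR : ∀ (s t : T) (x y : ℝ), 0 ≤ x → 0 ≤ y →
      Tendsto (fun u : ℝ => (P {ω | U s ω ≤ u * x ∧ U t ω ≤ u * y}).toReal / u)
        (𝓝[>] (0:ℝ)) (𝓝 (R s t x y)))
    (s t : T) {x y : ℝ} (hx : 0 ≤ x) (hy : 0 ≤ y) : 0 ≤ R s t x y := by
  refine ge_of_tendsto (hR s t x y hx hy) ?_
  filter_upwards [self_mem_nhdsWithin] with u hu
  exact div_nonneg ENNReal.toReal_nonneg (le_of_lt hu)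

/-- The tail copula is bounded by the second argument. -/
lemma tc_le_right
    (hunif : ∀ t : T, ∀ x ∈ Icc (0:ℝ) 1, P {ω | U t ω ≤ x} = ENNReal.ofReal x)
    (hR : ∀ (s t : T) (x y : ℝ), 0 ≤ x → 0 ≤ y →
      Tendsto (fun u : ℝ => (P {ω | U s ω ≤ u * x ∧ U t ω ≤ u * y}).toReal / u)
        (𝓝[>] (0:ℝ)) (𝓝 (R s t x y)))
    (s t : T) {x y : ℝ} (hx : 0 ≤ x) (hy : 0 ≤ y) : R s t x y ≤ y := by
  refine le_of_tendsto (hR s t x y hx hy) ?_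
  have hmem : Ioo (0:ℝ) (y+1)⁻¹ ∈ 𝓝[>] (0:ℝ) :=
    Ioo_mem_nhdsGT_of_mem ⟨le_rfl, by positivity⟩
  filter_upwards [hmem] with u hu
  have hu0 : (0:ℝ) < u := hu.1
  have huy : u * y ∈ Icc (0:ℝ) 1 := by
    constructor
    · positivity
    · have : u * y ≤ u * (y + 1) := by nlinarith
      have h2 : u * (y + 1) < (y+1)⁻¹ * (y+1) := by
        apply mul_lt_mul_of_pos_right hu.2; positivity
      rw [inv_mul_cancel₀ (by positivity)] at h2
      linarith
  have hsub : {ω | U s ω ≤ u * x ∧ U t ω ≤ u * y} ⊆ {ω | U t ω ≤ u * y} :=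
    fun ω hω => hω.2
  have hle : (P {ω | U s ω ≤ u * x ∧ U t ω ≤ u * y}).toReal ≤ u * y := by
    have := ENNReal.toReal_mono (by rw [hunif t _ huy]; exact ENNReal.ofReal_ne_top)
      (measure_mono hsub)
    rwa [hunif t _ huy, ENNReal.toReal_ofReal (by positivity)] at this
  calc (P {ω | U s ω ≤ u * x ∧ U t ω ≤ u * y}).toReal / u ≤ (u * y) / u := by gcongr
    _ = y := by field_simp

/-- The tail copula is bounded by the first argument. -/
lemma tc_le_left
    (hunif : ∀ t : T, ∀ x ∈ Icc (0:ℝ) 1, P {ω | U t ω ≤ x} = ENNReal.ofReal x)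
    (hR : ∀ (s t : T) (x y : ℝ), 0 ≤ x → 0 ≤ y →
      Tendsto (fun u : ℝ => (P {ω | U s ω ≤ u * x ∧ U t ω ≤ u * y}).toReal / u)
        (𝓝[>] (0:ℝ)) (𝓝 (R s t x y)))
    (s t : T) {x y : ℝ} (hx : 0 ≤ x) (hy : 0 ≤ y) : R s t x y ≤ x := by
  refine le_of_tendsto (hR s t x y hx hy) ?_
  have hmem : Ioo (0:ℝ) (x+1)⁻¹ ∈ 𝓝[>] (0:ℝ) :=
    Ioo_mem_nhdsGT_of_mem ⟨le_rfl, by positivity⟩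
  filter_upwards [hmem] with u hu
  have hu0 : (0:ℝ) < u := hu.1
  have hux : u * x ∈ Icc (0:ℝ) 1 := by
    constructor
    · positivity
    · have : u * x ≤ u * (x + 1) := by nlinarith
      have h2 : u * (x + 1) < (x+1)⁻¹ * (x+1) := by
        apply mul_lt_mul_of_pos_right hu.2; positivity
      rw [inv_mul_cancel₀ (by positivity)] at h2
      linarith
  have hsub : {ω | U s ω ≤ u * x ∧ U t ω ≤ u * y} ⊆ {ω | U s ω ≤ u * x} :=
    fun ω hω => hω.1
  have hle : (P {ω | U s ω ≤ u * x ∧ U t ω ≤ u * y}).toReal ≤ u * x := by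
    have := ENNReal.toReal_mono (by rw [hunif s _ hux]; exact ENNReal.ofReal_ne_top)
      (measure_mono hsub)
    rwa [hunif s _ hux, ENNReal.toReal_ofReal (by positivity)] at this
  calc (P {ω | U s ω ≤ u * x ∧ U t ω ≤ u * y}).toReal / u ≤ (u * x) / u := by gcongr
    _ = x := by field_simp

/-- Homogeneity on the diagonal: R(x,x) = x · R(1,1) for x ≥ 0. -/
lemma tc_diag
    (hunif : ∀ t : T, ∀ x ∈ Icc (0:ℝ) 1, P {ω | U t ω ≤ x} = ENNReal.ofReal x)
    (hR : ∀ (s t : T) (x y : ℝ), 0 ≤ x → 0 ≤ y →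
      Tendsto (fun u : ℝ => (P {ω | U s ω ≤ u * x ∧ U t ω ≤ u * y}).toReal / u)
        (𝓝[>] (0:ℝ)) (𝓝 (R s t x y)))
    (s t : T) {x : ℝ} (hx : 0 ≤ x) : R s t x x = x * R s t 1 1 := by
  rcases eq_or_lt_of_le hx with h0 | hx0
  · rw [← h0, zero_mul]
    exact le_antisymm (tc_le_left hunif hR s t le_rfl le_rfl)
      (tc_nonneg hR s t le_rfl le_rfl)
  · have h1 := hR s t 1 1 zero_le_one zero_le_one
    have hmap : Tendsto (fun u : ℝ => u * x) (𝓝[>] (0:ℝ)) (𝓝[>] (0:ℝ)) := by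
      apply tendsto_nhdsWithin_of_tendsto_nhds_of_eventually_within
      · have : Tendsto (fun u : ℝ => u * x) (𝓝 (0:ℝ)) (𝓝 (0 * x)) :=
          tendsto_id.mul_const x
        simpa using this.mono_left nhdsWithin_le_nhds
      · filter_upwards [self_mem_nhdsWithin] with u hu
        exact mul_pos hu hx0
    have h2 := (h1.comp hmap).const_mul x
    have heq : (fun u : ℝ => x * ((P {ω | U s ω ≤ (u * x) * 1 ∧ U t ω ≤ (u * x) * 1}).toReal / (u * x)))
        =ᶠ[𝓝[>] (0:ℝ)]
        (fun u : ℝ => (P {ω | U s ω ≤ u * x ∧ U t ω ≤ u * x}).toReal / u) := by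
      filter_upwards [self_mem_nhdsWithin] with u hu
      have hu0 : (0:ℝ) < u := hu
      rw [mul_one]
      field_simp
    have h3 : Tendsto (fun u : ℝ => (P {ω | U s ω ≤ u * x ∧ U t ω ≤ u * x}).toReal / u)
        (𝓝[>] (0:ℝ)) (𝓝 (x * R s t 1 1)) := Tendsto.congr' heq h2
    exact tendsto_nhds_unique (hR s t x x hx hx) h3

end aux

/-- Lemma (characterization of convergence in the standard deviation semimetric). -/
theorem empirical_tail_copulas_stmt5
    {Ω : Type*} [MeasurableSpace Ω] (P : Measure Ω) [IsProbabilityMeasure P]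
    {T : Type*} [Nonempty T] (U : T → Ω → ℝ)
    (hunif : ∀ t : T, ∀ x ∈ Icc (0:ℝ) 1, P {ω | U t ω ≤ x} = ENNReal.ofReal x)
    (R : T → T → ℝ → ℝ → ℝ)
    (hR : ∀ (s t : T) (x y : ℝ), 0 ≤ x → 0 ≤ y →
      Tendsto (fun u : ℝ => (P {ω | U s ω ≤ u * x ∧ U t ω ≤ u * y}).toReal / u)
        (𝓝[>] (0:ℝ)) (𝓝 (R s t x y)))
    (sn : ℕ → T) (xn : ℕ → ℝ) (hxn : ∀ n, 0 ≤ xn n)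
    (s : T) (x : ℝ) (hx : 0 ≤ x) :
    Tendsto (fun n => Real.sqrt (xn n - 2 * R (sn n) s (xn n) x + x)) atTop (𝓝 0)
      ↔ (Tendsto xn atTop (𝓝 x) ∧
          Tendsto (fun n => x * (R (sn n) s 1 1 - 1)) atTop (𝓝 0)) := by
  set D : ℕ → ℝ := fun n => xn n - 2 * R (sn n) s (xn n) x + x with hD_def
  set c : ℕ → ℝ := fun n => R (sn n) s 1 1 with hc_def
  -- key pointwise inequalities
  have hc1 : ∀ n, c n ≤ 1 := fun n => tc_le_left hunif hR _ _ zero_le_one zero_le_one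
  have hc0 : ∀ n, 0 ≤ c n := fun n => tc_nonneg hR _ _ zero_le_one zero_le_one
  have key : ∀ n, |xn n - x| ≤ D n ∧ x * (1 - c n) ≤ D n ∧
      D n ≤ |xn n - x| + 2 * (x * (1 - c n)) := by
    intro n
    set m := min (xn n) x with hm_def
    set M := max (xn n) x with hM_def
    have hm0 : 0 ≤ m := le_min (hxn n) hx
    have hM0 : 0 ≤ M := hm0.trans (min_le_max)
    have hmx : m ≤ x := min_le_right _ _
    have hxM : x ≤ M := le_max_right _ _
    have hsum : m + M = xn n + x := min_add_max _ _
    have hdiff : M - m = |xn n - x| := by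
      rcases le_total (xn n) x with h | h
      · rw [hM_def, hm_def, max_eq_right h, min_eq_left h, abs_of_nonpos (by linarith)]; ring
      · rw [hM_def, hm_def, max_eq_left h, min_eq_right h, abs_of_nonneg (by linarith)]
    -- r bounds
    have hrle : R (sn n) s (xn n) x ≤ m :=
      le_min (tc_le_left hunif hR _ _ (hxn n) hx) (tc_le_right hunif hR _ _ (hxn n) hx)
    have hlow : m * c n ≤ R (sn n) s (xn n) x := by
      have := tc_mono hR (sn n) s hm0 hm0 (min_le_left _ _) (min_le_right _ _)
      rwa [tc_diag hunif hR _ _ hm0] at this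
    have hhigh : R (sn n) s (xn n) x ≤ M * c n := by
      have := tc_mono hR (sn n) s (hxn n) hx (le_max_left (xn n) x) (le_max_right (xn n) x)
      rwa [tc_diag hunif hR _ _ hM0] at this
    have hDn : D n = xn n - 2 * R (sn n) s (xn n) x + x := rfl
    refine ⟨?_, ?_, ?_⟩
    · rw [← hdiff]; linarith [hDn, hrle, hsum]
    · have h2 : x * (1 - c n) ≤ M * (1 - c n) :=
        by nlinarith [mul_nonneg (sub_nonneg.2 hxM) (sub_nonneg.2 (hc1 n))]
      linarith [hDn, hhigh, hrle, hsum, h2]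
    · have h2 : m * (1 - c n) ≤ x * (1 - c n) :=
        by nlinarith [mul_nonneg (sub_nonneg.2 hmx) (sub_nonneg.2 (hc1 n))]
      linarith [hDn, hlow, hsum, hdiff, h2]
  have hD0 : ∀ n, 0 ≤ D n := fun n => (abs_nonneg _).trans (key n).1
  constructor
  · intro h
    have hD : Tendsto D atTop (𝓝 0) := by
      have h2 := h.mul h
      rw [mul_zero] at h2
      exact h2.congr fun n => Real.mul_self_sqrt (hD0 n)
    have habs : Tendsto (fun n => |xn n - x|) atTop (𝓝 0) :=
      squeeze_zero (fun n => abs_nonneg _) (fun n => (key n).1) hD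
    constructor
    · rw [← tendsto_sub_nhds_zero_iff, tendsto_zero_iff_abs_tendsto_zero]
      exact habs
    · have hpos : Tendsto (fun n => x * (1 - c n)) atTop (𝓝 0) :=
        squeeze_zero (fun n => mul_nonneg hx (by linarith [hc1 n]))
          (fun n => (key n).2.1) hD
      have := hpos.neg
      rw [neg_zero] at this
      exact this.congr fun n => by ring
  · rintro ⟨h1, h2⟩
    have habs : Tendsto (fun n => |xn n - x|) atTop (𝓝 0) := by
      rw [← tendsto_sub_nhds_zero_iff, tendsto_zero_iff_abs_tendsto_zero] at h1
      exact h1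
    have h1c : Tendsto (fun n => x * (1 - c n)) atTop (𝓝 0) := by
      have := h2.neg
      rw [neg_zero] at this
      exact this.congr fun n => by ring
    have hbound : Tendsto (fun n => |xn n - x| + 2 * (x * (1 - c n))) atTop (𝓝 0) := by
      have := habs.add (h1c.const_mul 2)
      simpa using this
    have hD : Tendsto D atTop (𝓝 0) :=
      squeeze_zero hD0 (fun n => (key n).2.2) hbound
    have := (Real.continuous_sqrt.tendsto 0).comp hD
    rw [Real.sqrt_zero] at this
    exact this
end

section
/- Let (Ω, 𝓕, P) be a probability space, T a nonempty set, and U : T → Ω → ℝ a family of random variables such that for every t ∈ T the random variable U(t) is uniformly distributed on the interval (0,1). Assume that for all s, t ∈ T and all x, y ∈ [0,∞) the bivariate tail-copula limit R_{(s,t)}(x,y) = lim_{u↓0} u⁻¹ P[U(s) ≤ u·x, U(t) ≤ u·y] exists, and define ρ₂((s,x),(t,y)) = (x − 2·R_{(s,t)}(x,y) + y)^{1/2} and ρ_{2,T}(s,t) = ρ₂((s,1),(t,1)) = (2 − 2·R_{(s,t)}(1,1))^{1/2}. Suppose the space (T, ρ_{2,T}) is complete, i.e., for every sequence (s_n) in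 T with lim_{n→∞} inf_{k,l ≥ n} R_{(s_k,s_l)}(1,1) = 1 there exists s ∈ T with R_{(s_n,s)}(1,1) → 1. Then (T × [0,∞), ρ₂) is complete: every sequence (s_n, x_n) in T × [0,∞) with ρ₂((s_k,x_k),(s_l,x_l)) → 0 as k, l → ∞ admits a point (s, x) ∈ T × [0,∞) with ρ₂((s_n,x_n),(s,x)) → 0 as n → ∞. -/
open MeasureTheory Filter Set Topology

/-- Lemma (completeness of `T × [0,∞)` under the standard deviation semimetric,
given completeness of `T` under the induced semimetric). -/
theorem empirical_tail_copulas_stmt9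
    {Ω : Type*} [MeasurableSpace Ω] (P : Measure Ω) [IsProbabilityMeasure P]
    {T : Type*} [Nonempty T] (U : T → Ω → ℝ)
    (hunif : ∀ t : T, ∀ x ∈ Icc (0:ℝ) 1, P {ω | U t ω ≤ x} = ENNReal.ofReal x)
    (R : T → T → ℝ → ℝ → ℝ)
    (hR : ∀ (s t : T) (x y : ℝ), 0 ≤ x → 0 ≤ y →
      Tendsto (fun u : ℝ => (P {ω | U s ω ≤ u * x ∧ U t ω ≤ u * y}).toReal / u)
        (𝓝[>] (0:ℝ)) (𝓝 (R s t x y)))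
    (hcomplete : ∀ s : ℕ → T,
      Tendsto (fun n => sInf {r : ℝ | ∃ k ≥ n, ∃ l ≥ n, r = R (s k) (s l) 1 1})
          atTop (𝓝 1) →
        ∃ t : T, Tendsto (fun n => R (s n) t 1 1) atTop (𝓝 1))
    (sn : ℕ → T) (xn : ℕ → ℝ) (hxn : ∀ n, 0 ≤ xn n)
    (hcauchy : Tendsto
      (fun p : ℕ × ℕ =>
        Real.sqrt (xn p.1 - 2 * R (sn p.1) (sn p.2) (xn p.1) (xn p.2) + xn p.2))
      (atTop ×ˢ atTop) (𝓝 0)) :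
    ∃ s : T, ∃ x : ℝ, 0 ≤ x ∧
      Tendsto (fun n => Real.sqrt (xn n - 2 * R (sn n) s (xn n) x + x)) atTop (𝓝 0) := by
  -- R is bounded above by each coordinate
  have hub : ∀ (s t : T) (x y : ℝ), 0 ≤ x → 0 ≤ y → R s t x y ≤ x := by
    intro s t x y hx hy
    refine le_of_tendsto (hR s t x y hx hy) ?_
    filter_upwards [Ioo_mem_nhdsGT_of_mem
      (show (0:ℝ) ∈ Ico 0 (1/(x+1)) from ⟨le_rfl, by positivity⟩)] with u hu
    have hu0 : 0 < u := hu.1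
    have hux : u * x ∈ Icc (0:ℝ) 1 := by
      constructor
      · positivity
      · have h2 : u * (x+1) < 1 := (lt_div_iff₀ (by positivity)).mp hu.2
        nlinarith
    have hle : P {ω | U s ω ≤ u*x ∧ U t ω ≤ u*y} ≤ P {ω | U s ω ≤ u*x} :=
      measure_mono (fun ω h => h.1)
    rw [hunif s (u*x) hux] at hle
    have h3 : (P {ω | U s ω ≤ u*x ∧ U t ω ≤ u*y}).toReal ≤ u * x := by
      have := ENNReal.toReal_mono ENNReal.ofReal_ne_top hle
      rwa [ENNReal.toReal_ofReal (by positivity)] at this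
    rw [div_le_iff₀ hu0]
    linarith
  have hub' : ∀ (s t : T) (x y : ℝ), 0 ≤ x → 0 ≤ y → R s t x y ≤ y := by
    intro s t x y hx hy
    refine le_of_tendsto (hR s t x y hx hy) ?_
    filter_upwards [Ioo_mem_nhdsGT_of_mem
      (show (0:ℝ) ∈ Ico 0 (1/(y+1)) from ⟨le_rfl, by positivity⟩)] with u hu
    have hu0 : 0 < u := hu.1
    have huy : u * y ∈ Icc (0:ℝ) 1 := by
      constructor
      · positivity
      · have h2 : u * (y+1) < 1 := (lt_div_iff₀ (by positivity)).mp hu.2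
        nlinarith
    have hle : P {ω | U s ω ≤ u*x ∧ U t ω ≤ u*y} ≤ P {ω | U t ω ≤ u*y} :=
      measure_mono (fun ω h => h.2)
    rw [hunif t (u*y) huy] at hle
    have h3 : (P {ω | U s ω ≤ u*x ∧ U t ω ≤ u*y}).toReal ≤ u * y := by
      have := ENNReal.toReal_mono ENNReal.ofReal_ne_top hle
      rwa [ENNReal.toReal_ofReal (by positivity)] at this
    rw [div_le_iff₀ hu0]
    linarith
  -- monotonicity
  have hmono : ∀ (s t : T) (x y x' y' : ℝ), 0 ≤ x → 0 ≤ y → x ≤ x' → y ≤ y' →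
      R s t x y ≤ R s t x' y' := by
    intro s t x y x' y' hx hy hxx hyy
    refine le_of_tendsto_of_tendsto (hR s t x y hx hy)
      (hR s t x' y' (hx.trans hxx) (hy.trans hyy)) ?_
    filter_upwards [self_mem_nhdsWithin] with u hu
    have hu0 : (0:ℝ) < u := hu
    have hle : P {ω | U s ω ≤ u*x ∧ U t ω ≤ u*y} ≤ P {ω | U s ω ≤ u*x' ∧ U t ω ≤ u*y'} := by
      refine measure_mono (fun ω h => ⟨h.1.trans ?_, h.2.trans ?_⟩)
      · exact mul_le_mul_of_nonneg_left hxx hu0.le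
      · exact mul_le_mul_of_nonneg_left hyy hu0.le
    have := ENNReal.toReal_mono (measure_ne_top P _) hle
    exact div_le_div_of_nonneg_right this hu0.le
  -- homogeneity
  have hhom : ∀ (s t : T) (x y c : ℝ), 0 ≤ x → 0 ≤ y → 0 < c →
      R s t (c*x) (c*y) = c * R s t x y := by
    intro s t x y c hx hy hc
    have h1 := hR s t (c*x) (c*y) (by positivity) (by positivity)
    have hmap : Tendsto (fun u : ℝ => u * c) (𝓝[>] (0:ℝ)) (𝓝[>] (0:ℝ)) := by
      apply tendsto_nhdsWithin_of_tendsto_nhds_of_eventually_within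
      · have : Tendsto (fun u : ℝ => u * c) (𝓝 0) (𝓝 (0 * c)) :=
          (continuous_mul_right c).tendsto 0
        simpa using this.mono_left nhdsWithin_le_nhds
      · filter_upwards [self_mem_nhdsWithin] with u hu
        exact mul_pos hu hc
    have h2 : Tendsto (fun u : ℝ =>
        c * ((P {ω | U s ω ≤ (u*c) * x ∧ U t ω ≤ (u*c) * y}).toReal / (u*c)))
        (𝓝[>] (0:ℝ)) (𝓝 (c * R s t x y)) :=
      ((hR s t x y hx hy).comp hmap).const_mul c
    refine tendsto_nhds_unique h1 (h2.congr' ?_)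
    filter_upwards [self_mem_nhdsWithin] with u hu
    have hu0 : (0:ℝ) < u := hu
    have he : {ω | U s ω ≤ (u*c) * x ∧ U t ω ≤ (u*c) * y}
        = {ω | U s ω ≤ u * (c*x) ∧ U t ω ≤ u * (c*y)} := by
      congr 1 <;> ring_nf
    rw [he]
    field_simp
  -- R with second argument 0 is 0
  have hzero : ∀ (s t : T) (x : ℝ), 0 ≤ x → R s t x 0 = 0 := by
    intro s t x hx
    have h1 := hR s t x 0 hx le_rfl
    have h0 : ∀ u : ℝ, P {ω | U s ω ≤ u * x ∧ U t ω ≤ u * 0} = 0 := by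
      intro u
      have hle : P {ω | U s ω ≤ u * x ∧ U t ω ≤ u * 0} ≤ P {ω | U t ω ≤ (0:ℝ)} := by
        refine measure_mono (fun ω h => ?_)
        simpa [mul_zero] using h.2
      rw [hunif t 0 ⟨le_rfl, zero_le_one⟩] at hle
      simpa using hle
    have heq : (fun u : ℝ => (P {ω | U s ω ≤ u * x ∧ U t ω ≤ u * 0}).toReal / u)
        = fun _ : ℝ => (0:ℝ) := by
      funext u
      rw [h0 u]
      simp
    rw [heq] at h1
    exact tendsto_nhds_unique h1 tendsto_const_nhds
  -- Step 1 : the squared Cauchy expression tends to 0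
  set E : ℕ × ℕ → ℝ := fun p => xn p.1 - 2 * R (sn p.1) (sn p.2) (xn p.1) (xn p.2) + xn p.2
    with hEdef
  have hEnn : ∀ p, 0 ≤ E p := by
    intro p
    have h1 := hub (sn p.1) (sn p.2) (xn p.1) (xn p.2) (hxn _) (hxn _)
    have h2 := hub' (sn p.1) (sn p.2) (xn p.1) (xn p.2) (hxn _) (hxn _)
    simp only [hEdef]
    rcases le_total (xn p.1) (xn p.2) with h | h <;> linarith
  have hE0 : Tendsto E (atTop ×ˢ atTop) (𝓝 0) := by
    have h := hcauchy.mul hcauchy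
    rw [mul_zero] at h
    exact h.congr fun p => Real.mul_self_sqrt (hEnn p)
  -- Step 2 : xn is Cauchy
  have hdist : Tendsto (fun p : ℕ × ℕ => dist (xn p.1) (xn p.2)) (atTop ×ˢ atTop) (𝓝 0) := by
    refine tendsto_of_tendsto_of_tendsto_of_le_of_le tendsto_const_nhds hE0
      (fun p => dist_nonneg) (fun p => ?_)
    have h1 := hub (sn p.1) (sn p.2) (xn p.1) (xn p.2) (hxn _) (hxn _)
    have h2 := hub' (sn p.1) (sn p.2) (xn p.1) (xn p.2) (hxn _) (hxn _)
    rw [Real.dist_eq, abs_sub_le_iff]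
    constructor <;> simp only [hEdef] <;> linarith
  have hcs : CauchySeq xn := by
    rw [cauchySeq_iff_tendsto_dist_atTop_0]
    rwa [← prod_atTop_atTop_eq] 
  obtain ⟨x, hx⟩ := cauchySeq_tendsto_of_complete hcs
  have hx0 : 0 ≤ x := ge_of_tendsto' hx hxn
  rcases eq_or_lt_of_le hx0 with hxz | hxpos
  · -- limit is 0 : take any point of T and x = 0
    obtain ⟨s⟩ := (inferInstance : Nonempty T)
    refine ⟨s, 0, le_rfl, ?_⟩
    have heq : (fun n => Real.sqrt (xn n - 2 * R (sn n) s (xn n) 0 + 0))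
        = fun n => Real.sqrt (xn n) := by
      funext n
      rw [hzero (sn n) s (xn n) (hxn n)]
      ring_nf
    rw [heq]
    have hx' : Tendsto xn atTop (𝓝 0) := by rwa [← hxz] at hx
    have : Tendsto (fun n => Real.sqrt (xn n)) atTop (𝓝 (Real.sqrt 0)) :=
      (Real.continuous_sqrt.tendsto 0).comp hx'
    simpa using this
  · -- limit is positive
    have hxf : Tendsto (fun p : ℕ × ℕ => xn p.1) (atTop ×ˢ atTop) (𝓝 x) := hx.comp tendsto_fst
    have hxs : Tendsto (fun p : ℕ × ℕ => xn p.2) (atTop ×ˢ atTop) (𝓝 x) := hx.comp tendsto_snd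
    have hRlim : Tendsto (fun p : ℕ × ℕ => R (sn p.1) (sn p.2) (xn p.1) (xn p.2))
        (atTop ×ˢ atTop) (𝓝 x) := by
      have h := ((hxf.add hxs).sub hE0).div_const 2
      have h2 : (x + x - 0) / 2 = x := by ring
      rw [h2] at h
      exact h.congr fun p => by simp only [hEdef]; ring
    have hmax : Tendsto (fun p : ℕ × ℕ => max (xn p.1) (xn p.2)) (atTop ×ˢ atTop) (𝓝 x) := by
      have := hxf.max hxs
      simpa using this
    have hLB : Tendsto (fun p : ℕ × ℕ =>
        R (sn p.1) (sn p.2) (xn p.1) (xn p.2) / max (xn p.1) (xn p.2))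
        (atTop ×ˢ atTop) (𝓝 1) := by
      have := hRlim.div hmax (ne_of_gt hxpos)
      rwa [div_self (ne_of_gt hxpos)] at this
    have hhalf : ∀ᶠ n in atTop, x/2 < xn n := hx.eventually (eventually_gt_nhds (by linarith))
    have hev : ∀ᶠ p : ℕ × ℕ in atTop ×ˢ atTop,
        R (sn p.1) (sn p.2) (xn p.1) (xn p.2) / max (xn p.1) (xn p.2)
          ≤ R (sn p.1) (sn p.2) 1 1 := by
      filter_upwards [tendsto_fst.eventually hhalf, tendsto_snd.eventually hhalf] with p h1 h2
      have hM : 0 < max (xn p.1) (xn p.2) := lt_max_of_lt_left (by linarith)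
      rw [div_le_iff₀ hM]
      have hmm : R (sn p.1) (sn p.2) (xn p.1) (xn p.2)
          ≤ R (sn p.1) (sn p.2) (max (xn p.1) (xn p.2)) (max (xn p.1) (xn p.2)) :=
        hmono _ _ _ _ _ _ (hxn _) (hxn _) (le_max_left _ _) (le_max_right _ _)
      have hh := hhom (sn p.1) (sn p.2) 1 1 (max (xn p.1) (xn p.2)) zero_le_one zero_le_one hM
      rw [mul_one] at hh
      rw [hh] at hmm
      linarith
    have hr1 : Tendsto (fun p : ℕ × ℕ => R (sn p.1) (sn p.2) 1 1)
        (atTop ×ˢ atTop) (𝓝 1) := by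
      refine tendsto_of_tendsto_of_tendsto_of_le_of_le' hLB tendsto_const_nhds hev ?_
      exact Eventually.of_forall fun p => hub _ _ 1 1 zero_le_one zero_le_one
    -- the sInf condition
    have hinf : Tendsto (fun n => sInf {r : ℝ | ∃ k ≥ n, ∃ l ≥ n, r = R (sn k) (sn l) 1 1})
        atTop (𝓝 1) := by
      rw [Metric.tendsto_atTop]
      intro ε hε
      have h2 : ∀ᶠ p : ℕ × ℕ in atTop ×ˢ atTop,
          dist (R (sn p.1) (sn p.2) 1 1) 1 < ε/2 :=
        Metric.tendsto_nhds.mp hr1 (ε/2) (by positivity)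
      rw [prod_atTop_atTop_eq, eventually_atTop] at h2
      obtain ⟨⟨N₁, N₂⟩, hN⟩ := h2
      refine ⟨max N₁ N₂, fun n hn => ?_⟩
      set S := {r : ℝ | ∃ k ≥ n, ∃ l ≥ n, r = R (sn k) (sn l) 1 1} with hS
      have hSlb : ∀ r ∈ S, 1 - ε/2 ≤ r := by
        rintro r ⟨k, hk, l, hl, rfl⟩
        have hd := hN (k, l) ⟨le_trans (le_trans (le_max_left _ _) hn) hk,
          le_trans (le_trans (le_max_right _ _) hn) hl⟩
        rw [Real.dist_eq, abs_sub_lt_iff] at hd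
        linarith [hd.2]
      have hSne : (R (sn n) (sn n) 1 1) ∈ S := ⟨n, le_rfl, n, le_rfl, rfl⟩
      have h1 : 1 - ε/2 ≤ sInf S := le_csInf ⟨_, hSne⟩ hSlb
      have h2' : sInf S ≤ 1 := by
        refine le_trans (csInf_le ⟨1 - ε/2, hSlb⟩ hSne) ?_
        exact hub _ _ 1 1 zero_le_one zero_le_one
      rw [Real.dist_eq, abs_sub_lt_iff]
      constructor <;> linarith
    obtain ⟨t, ht⟩ := hcomplete sn hinf
    refine ⟨t, x, hx0, ?_⟩
    -- squeeze for R (sn n) t (xn n) x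
    have hminlim : Tendsto (fun n => min (xn n) x) atTop (𝓝 x) := by
      have := hx.min (tendsto_const_nhds : Tendsto (fun _ : ℕ => x) atTop (𝓝 x))
      simpa using this
    have hlow : Tendsto (fun n => min (xn n) x * R (sn n) t 1 1) atTop (𝓝 x) := by
      have := hminlim.mul ht
      simpa using this
    have hRt : Tendsto (fun n => R (sn n) t (xn n) x) atTop (𝓝 x) := by
      refine tendsto_of_tendsto_of_tendsto_of_le_of_le' hlow hminlim ?_ ?_
      · filter_upwards [hhalf] with n hn
        have hm : 0 < min (xn n) x := lt_min (by linarith) hxpos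
        have hmm : R (sn n) t (min (xn n) x) (min (xn n) x) ≤ R (sn n) t (xn n) x :=
          hmono _ _ _ _ _ _ hm.le hm.le (min_le_left _ _) (min_le_right _ _)
        have hh := hhom (sn n) t 1 1 (min (xn n) x) zero_le_one zero_le_one hm
        rw [mul_one] at hh
        rw [hh] at hmm
        exact hmm
      · refine Eventually.of_forall fun n => le_min ?_ ?_
        · exact hub _ _ _ _ (hxn n) hx0
        · exact hub' _ _ _ _ (hxn n) hx0
    have hfin : Tendsto (fun n => xn n - 2 * R (sn n) t (xn n) x + x) atTop (𝓝 0) := by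
      have h := (hx.sub (hRt.const_mul 2)).add
        (tendsto_const_nhds : Tendsto (fun _ : ℕ => x) atTop (𝓝 x))
      have h2 : x - 2 * x + x = 0 := by ring
      rw [h2] at h
      exact h
    have : Tendsto (fun n => Real.sqrt (xn n - 2 * R (sn n) t (xn n) x + x)) atTop
        (𝓝 (Real.sqrt 0)) := (Real.continuous_sqrt.tendsto 0).comp hfin
    simpa using this
end

section
/- Let d ≥ 2, let Z : Ω → ℝ^d be a random vector whose law is the d-fold product of the standard normal distribution on ℝ, let A be an invertible real d×d matrix, set X = A·Z and Γ = A·Aᵀ with entries γ_{jk}. Then E[ min_{j=1,…,d} exp(X_j − γ_{jj}/2) ] = Σ_{j=1}^d P[ ∀k ≠ j : X_j + γ_{jj}/2 ≤ X_k + γ_{kj} − γ_{kk}/2 ]. -/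
open MeasureTheory Filter Set Topology ProbabilityTheory Matrix
open scoped ENNReal NNReal Real

lemma gaussian_tilt (a : ℝ) :
    (gaussianReal 0 1).withDensity (fun x => ENNReal.ofReal (Real.exp (a * x - a ^ 2 / 2)))
      = gaussianReal a 1 := by
  rw [gaussianReal_of_var_ne_zero 0 one_ne_zero, gaussianReal_of_var_ne_zero a one_ne_zero,
    ← withDensity_mul _ (measurable_gaussianPDF _ _)
      (by fun_prop)]
  congr 1
  ext x
  simp only [Pi.mul_apply, gaussianPDF]
  rw [← ENNReal.ofReal_mul (gaussianPDFReal_nonneg _ _ _)]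
  congr 1
  simp only [gaussianPDFReal, NNReal.coe_one, mul_one]
  rw [mul_assoc, ← Real.exp_add]
  congr 1
  ring_nf

lemma lintegral_fin_prod : ∀ {n : ℕ} (f : Fin n → ℝ → ℝ≥0∞), (∀ i, Measurable (f i)) →
    ∫⁻ z, ∏ i, f i (z i) ∂(Measure.pi fun _ : Fin n => gaussianReal 0 1)
      = ∏ i, ∫⁻ x, f i x ∂(gaussianReal 0 1) := by
  intro n
  induction n with
  | zero =>
    intro f hf
    simp [Measure.pi_of_empty, lintegral_dirac]
  | succ n ih =>
    intro f hf
    set e := MeasurableEquiv.piFinSuccAbove (fun _ : Fin (n+1) => ℝ) 0 with he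
    have hpres := measurePreserving_piFinSuccAbove
      (fun _ : Fin (n+1) => gaussianReal 0 1) 0
    have hmeas : Measurable fun z : Fin (n+1) → ℝ => ∏ i, f i (z i) :=
      Finset.measurable_prod _ fun i _ => (hf i).comp (measurable_pi_apply i)
    have hcomp := (hpres.symm e).lintegral_comp hmeas
    rw [← hcomp]
    have hsymm : ∀ p : ℝ × (Fin n → ℝ), e.symm p = Fin.cons p.1 p.2 := by
      rintro ⟨x, y⟩
      simp [e, MeasurableEquiv.piFinSuccAbove_symm_apply, Fin.insertNth_zero]
      rfl
    have key : ∀ p : ℝ × (Fin n → ℝ),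
        (∏ i, f i ((e.symm p) i)) = f 0 p.1 * ∏ j, f (Fin.succ j) (p.2 j) := by
      intro p
      rw [hsymm p, Fin.prod_univ_succ]
      simp
    simp_rw [key]
    rw [lintegral_prod_mul (f := fun x => f 0 x)
      (g := fun y : Fin n → ℝ => ∏ j, f (Fin.succ j) (y j)) ((hf 0).aemeasurable)
      ((Finset.measurable_prod _ fun j _ => (hf _).comp (measurable_pi_apply j)).aemeasurable)]
    rw [ih (fun j => f (Fin.succ j)) (fun j => hf _), Fin.prod_univ_succ]

lemma pi_tilt {n : ℕ} (a : Fin n → ℝ) :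
    (Measure.pi fun _ : Fin n => gaussianReal 0 1).withDensity
      (fun z => ∏ i, ENNReal.ofReal (Real.exp (a i * z i - a i ^ 2 / 2)))
      = (Measure.pi fun _ : Fin n => gaussianReal 0 1).map (· + a) := by
  have hD : ∀ i : Fin n, Measurable fun x : ℝ => ENNReal.ofReal (Real.exp (a i * x - a i ^ 2 / 2)) := by
    intro i; fun_prop
  have hmp : MeasurePreserving (fun z : Fin n → ℝ => z + a)
      (Measure.pi fun _ : Fin n => gaussianReal 0 1)
      (Measure.pi fun i => gaussianReal (a i) 1) := by
    have := measurePreserving_pi (fun _ : Fin n => gaussianReal 0 1)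
      (fun i => gaussianReal (a i) 1) (f := fun i (x : ℝ) => x + a i)
      (fun i => ⟨measurable_add_const _, by
        simpa using gaussianReal_map_add_const (μ := 0) (v := 1) (a i)⟩)
    exact this
  rw [hmp.map_eq]
  refine (Measure.pi_eq (μ := fun i => gaussianReal (a i) 1) fun s hs => ?_).symm
  rw [withDensity_apply _ (MeasurableSet.univ_pi hs)]
  have hind : ∀ z : Fin n → ℝ,
      (univ.pi s).indicator (fun z => ∏ i, ENNReal.ofReal (Real.exp (a i * z i - a i ^ 2 / 2))) z
        = ∏ i, ((s i).indicator (fun x => ENNReal.ofReal (Real.exp (a i * x - a i ^ 2 / 2)))) (z i) := by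
    intro z
    by_cases hz : z ∈ univ.pi s
    · rw [Set.indicator_of_mem hz]
      refine Finset.prod_congr rfl fun i _ => ?_
      rw [Set.indicator_of_mem (hz i (Set.mem_univ i))]
    · rw [Set.indicator_of_notMem hz]
      have hex : ∃ i, z i ∉ s i := by simpa [Set.mem_pi] using hz
      obtain ⟨i, hi⟩ := hex
      exact (Finset.prod_eq_zero (Finset.mem_univ i)
        (by rw [Set.indicator_of_notMem hi])).symm
  rw [← lintegral_indicator (MeasurableSet.univ_pi hs)]
  simp_rw [hind]
  rw [lintegral_fin_prod _ (fun i => (hD i).indicator (hs i))]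
  refine Finset.prod_congr rfl fun i _ => ?_
  rw [lintegral_indicator (hs i), ← withDensity_apply _ (hs i), gaussian_tilt]

lemma gaussian_singleton_null (t : ℝ) : gaussianReal 0 1 {t} = 0 :=
  gaussianReal_absolutelyContinuous 0 one_ne_zero (measure_singleton t)

lemma hyperplane_null {m : ℕ} (b : Fin m → ℝ) (hb : b ≠ 0) (c : ℝ) :
    (Measure.pi fun _ : Fin m => gaussianReal 0 1) {z | ∑ i, b i * z i = c} = 0 := by
  obtain ⟨i₀, hi₀⟩ : ∃ i, b i ≠ 0 := by
    by_contra h; push_neg at h; exact hb (funext h)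
  cases m with
  | zero => exact absurd i₀.2 (by omega)
  | succ n =>
  set S : Set (Fin (n+1) → ℝ) := {z | ∑ i, b i * z i = c} with hSdef
  have hS : MeasurableSet S := by
    have : Measurable fun z : Fin (n+1) → ℝ => ∑ i, b i * z i :=
      Finset.measurable_sum _ fun i _ => (measurable_pi_apply i).const_mul _
    exact measurableSet_eq_fun this measurable_const
  set e := MeasurableEquiv.piFinSuccAbove (fun _ : Fin (n+1) => ℝ) i₀ with he
  have hpres := measurePreserving_piFinSuccAbove
    (fun _ : Fin (n+1) => gaussianReal 0 1) i₀
  have hT : MeasurableSet (e.symm ⁻¹' S) := e.symm.measurable hS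
  have h1 : (Measure.pi fun _ : Fin (n+1) => gaussianReal 0 1) S
      = ((gaussianReal 0 1).prod (Measure.pi fun _ : Fin n => gaussianReal 0 1))
        (e.symm ⁻¹' S) := by
    rw [← hpres.map_eq, Measure.map_apply e.measurable hT]
    congr 1
    ext z
    simp
  rw [h1, Measure.prod_apply_symm hT]
  have hsec : ∀ y : Fin n → ℝ,
      (fun x => (x, y)) ⁻¹' (e.symm ⁻¹' S) ⊆ {(c - ∑ j, b (i₀.succAbove j) * y j) / b i₀} := by
    intro y x hx
    have hx' : ∑ i, b i * (e.symm (x, y)) i = c := hx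
    simp only [e, MeasurableEquiv.piFinSuccAbove_symm_apply] at hx'
    rw [Fin.sum_univ_succAbove _ i₀] at hx'
    simp only [Fin.insertNthEquiv_apply, Fin.insertNth_apply_same,
      Fin.insertNth_apply_succAbove] at hx'
    have hbx : b i₀ * x = c - ∑ j, b (i₀.succAbove j) * y j := by linarith
    simp only [Set.mem_singleton_iff]
    field_simp
    linarith
  have : ∀ y : Fin n → ℝ,
      gaussianReal 0 1 ((fun x => (x, y)) ⁻¹' (e.symm ⁻¹' S)) = 0 := fun y =>
    measure_mono_null (hsec y) (gaussian_singleton_null _)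
  simp [this]

/-- Lemma (expectation of the minimum of correlated log-normal variables with unit
mean as a sum of Gaussian orthant probabilities). -/
theorem empirical_tail_copulas_stmt10
    {Ω : Type*} [MeasurableSpace Ω] (P : Measure Ω) [IsProbabilityMeasure P]
    (d : ℕ) (hd : 2 ≤ d)
    (Z : Ω → Fin d → ℝ) (hZmeas : Measurable Z)
    (hZ : Measure.map Z P = Measure.pi fun _ : Fin d => gaussianReal 0 1)
    (A : Matrix (Fin d) (Fin d) ℝ) (hA : IsUnit A.det) :
    (∫ ω, ⨅ j, Real.exp (A.mulVec (Z ω) j - (A * Aᵀ) j j / 2) ∂P)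
      = ∑ j, (P {ω | ∀ k, k ≠ j →
          A.mulVec (Z ω) j + (A * Aᵀ) j j / 2
            ≤ A.mulVec (Z ω) k + (A * Aᵀ) k j - (A * Aᵀ) k k / 2}).toReal := by
  classical
  have hd1 : 0 < d := by omega
  haveI : Nonempty (Fin d) := ⟨⟨0, hd1⟩⟩
  set μ : Measure (Fin d → ℝ) := Measure.pi fun _ : Fin d => gaussianReal 0 1 with hμ
  haveI : IsProbabilityMeasure μ := by rw [hμ]; infer_instance
  -- abbreviations
  set G : Fin d → Fin d → ℝ := fun j k => (A * Aᵀ) j k with hG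
  have hGapp : ∀ j k, (A * Aᵀ) j k = G j k := fun _ _ => rfl
  have hGsum : ∀ j k, G j k = ∑ i, A j i * A k i := by
    intro j k; simp [hG, Matrix.mul_apply, Matrix.transpose_apply]
  have hmulVec : ∀ (z : Fin d → ℝ) (j : Fin d), A.mulVec z j = ∑ i, A j i * z i := by
    intro z j; simp [Matrix.mulVec, dotProduct]
  set Y : Fin d → (Fin d → ℝ) → ℝ := fun j z => A.mulVec z j - G j j / 2 with hY
  have hXmeas : ∀ j, Measurable fun z : Fin d → ℝ => A.mulVec z j := by
    intro j
    have : (fun z : Fin d → ℝ => A.mulVec z j) = fun z => ∑ i, A j i * z i := by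
      funext z; exact hmulVec z j
    rw [this]
    exact Finset.measurable_sum _ fun i _ => (measurable_pi_apply i).const_mul _
  have hYmeas : ∀ j, Measurable (Y j) := fun j => (hXmeas j).sub measurable_const
  set F : (Fin d → ℝ) → ℝ := fun z => ⨅ j, Real.exp (Y j z) with hF
  have hFmeas : Measurable F :=
    Measurable.iInf fun j => Real.measurable_exp.comp (hYmeas j)
  -- the tie-breaking argmin cells
  set C : Fin d → Set (Fin d → ℝ) :=
    fun j => {z | (∀ k, Y j z ≤ Y k z) ∧ ∀ k, k < j → Y j z < Y k z} with hCdef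
  have hC : ∀ j, MeasurableSet (C j) := by
    intro j
    have h1 : MeasurableSet {z | ∀ k, Y j z ≤ Y k z} := by
      rw [Set.setOf_forall]
      exact MeasurableSet.iInter fun k => measurableSet_le (hYmeas j) (hYmeas k)
    have h2 : MeasurableSet {z | ∀ k, k < j → Y j z < Y k z} := by
      rw [Set.setOf_forall]
      refine MeasurableSet.iInter fun k => ?_
      by_cases hk : k < j
      · have : {z : Fin d → ℝ | k < j → Y j z < Y k z} = {z | Y j z < Y k z} := by
          ext z; simp [hk]
        rw [this]; exact measurableSet_lt (hYmeas j) (hYmeas k)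
      · have : {z : Fin d → ℝ | k < j → Y j z < Y k z} = Set.univ := by
          ext z; simp [hk]
        rw [this]; exact MeasurableSet.univ
    exact h1.inter h2
  have hmem : ∀ z, ∃ j, z ∈ C j := by
    intro z
    have hne : (Finset.univ.filter fun j => ∀ k, Y j z ≤ Y k z).Nonempty := by
      obtain ⟨j, hj⟩ := Finite.exists_min fun j => Y j z
      exact ⟨j, by simp [hj]⟩
    set j0 := (Finset.univ.filter fun j => ∀ k, Y j z ≤ Y k z).min' hne with hj0
    have h1 : ∀ k, Y j0 z ≤ Y k z := by
      have := Finset.min'_mem _ hne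
      simpa using this
    refine ⟨j0, h1, fun k hk => ?_⟩
    rcases lt_or_eq_of_le (h1 k) with h | h
    · exact h
    · exfalso
      have hkmem : k ∈ Finset.univ.filter fun j => ∀ m, Y j z ≤ Y m z := by
        simp only [Finset.mem_filter, Finset.mem_univ, true_and]
        intro m; rw [← h]; exact h1 m
      exact absurd (Finset.min'_le _ _ hkmem) (not_le.mpr hk)
  have hdisj : ∀ z (j j' : Fin d), z ∈ C j → z ∈ C j' → j = j' := by
    intro z j j' hj hj'
    by_contra hne
    rcases lt_or_gt_of_ne hne with h | h
    · exact absurd (hj.1 j') (not_le.mpr (hj'.2 j h))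
    · exact absurd (hj'.1 j) (not_le.mpr (hj.2 j' h))
  -- target sets
  set T : Fin d → Set (Fin d → ℝ) := fun j =>
    {z | ∀ k, k ≠ j → A.mulVec z j + G j j / 2 ≤ A.mulVec z k + G k j - G k k / 2} with hTdef
  have hT : ∀ j, MeasurableSet (T j) := by
    intro j
    rw [hTdef]
    simp only [Set.setOf_forall]
    refine MeasurableSet.iInter fun k => ?_
    have hle : MeasurableSet {z : Fin d → ℝ | A.mulVec z j + G j j / 2
        ≤ A.mulVec z k + G k j - G k k / 2} :=
      measurableSet_le ((hXmeas j).add_const _) (((hXmeas k).add_const _).sub_const _)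
    by_cases hk : k = j
    · simp [hk]
    · simpa [hk] using hle
  -- shift identity
  have hshift : ∀ (j k : Fin d) (z : Fin d → ℝ),
      Y k (z + A j) = A.mulVec z k + G k j - G k k / 2 := by
    intro j k z
    have h1 : A.mulVec (z + A j) k = A.mulVec z k + G k j := by
      rw [hmulVec, hmulVec, hGsum]
      simp only [Pi.add_apply]
      rw [← Finset.sum_add_distrib]
      refine Finset.sum_congr rfl fun i _ => ?_
      ring
    simp only [hY]
    rw [h1]
  -- Cameron-Martin step
  have hterm : ∀ j, (∫⁻ z in C j, ENNReal.ofReal (Real.exp (Y j z)) ∂μ)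
      = μ {z | z + A j ∈ C j} := by
    intro j
    have hptwise : ∀ z : Fin d → ℝ, ENNReal.ofReal (Real.exp (Y j z))
        = ∏ i, ENNReal.ofReal (Real.exp (A j i * z i - A j i ^ 2 / 2)) := by
      intro z
      have hYsum : Y j z = ∑ i, (A j i * z i - A j i ^ 2 / 2) := by
        simp only [hY]
        rw [hmulVec, hGsum, Finset.sum_sub_distrib, ← Finset.sum_div]
        congr 2
        exact Finset.sum_congr rfl fun i _ => by ring
      rw [hYsum, Real.exp_sum, ENNReal.ofReal_prod_of_nonneg fun i _ => (Real.exp_pos _).le]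
    have hCm : ∫⁻ z in C j, ENNReal.ofReal (Real.exp (Y j z)) ∂μ
        = μ.withDensity (fun z => ∏ i, ENNReal.ofReal
            (Real.exp (A j i * z i - A j i ^ 2 / 2))) (C j) := by
      rw [withDensity_apply _ (hC j)]
      exact setLIntegral_congr_fun (hC j) (fun z _ => hptwise z)
    rw [hCm, hμ, pi_tilt (A j), Measure.map_apply (measurable_add_const (A j)) (hC j)]
    rfl
  -- C-shifted vs T: a.e. equal
  have hsub : ∀ j, {z | z + A j ∈ C j} ⊆ T j := by
    intro j z hz k hkj
    have h1 := hz.1 k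
    rw [hshift j j z, hshift j k z] at h1
    linarith
  have hrow_ne : ∀ j k : Fin d, j ≠ k → (fun i => A j i - A k i) ≠ 0 := by
    intro j k hjk hb
    have hAjk : A j = A k := by
      funext i
      have := congrFun hb i
      simpa [sub_eq_zero] using this
    have := Matrix.det_zero_of_row_eq hjk hAjk
    exact (isUnit_iff_ne_zero.mp hA) this
  have htie : ∀ j k : Fin d, j ≠ k →
      μ {z | A.mulVec z j + G j j / 2 = A.mulVec z k + G k j - G k k / 2} = 0 := by
    intro j k hjk
    have hset : {z : Fin d → ℝ | A.mulVec z j + G j j / 2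
        = A.mulVec z k + G k j - G k k / 2}
        = {z | ∑ i, (A j i - A k i) * z i = G k j - G k k / 2 - G j j / 2} := by
      ext z
      simp only [Set.mem_setOf_eq, hmulVec]
      constructor
      · intro h
        rw [Finset.sum_congr rfl fun i _ => sub_mul (A j i) (A k i) (z i),
          Finset.sum_sub_distrib]
        linarith
      · intro h
        rw [Finset.sum_congr rfl fun i _ => sub_mul (A j i) (A k i) (z i),
          Finset.sum_sub_distrib] at h
        linarith
    rw [hset, hμ]
    exact hyperplane_null _ (hrow_ne j k hjk) _
  have hdiffnull : ∀ j, μ (T j \ {z | z + A j ∈ C j}) = 0 := by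
    intro j
    have hsubU : T j \ {z | z + A j ∈ C j} ⊆
        ⋃ k ∈ Finset.univ.filter (· < j), {z : Fin d → ℝ |
          A.mulVec z j + G j j / 2 = A.mulVec z k + G k j - G k k / 2} := by
      intro z hz
      obtain ⟨hzT, hzC⟩ := hz
      have hle : ∀ k, Y j (z + A j) ≤ Y k (z + A j) := by
        intro k
        by_cases hk : k = j
        · subst hk; exact le_refl _
        · rw [hshift j j z, hshift j k z]
          have := hzT k hk
          linarith
      have hnotall : ¬ ∀ k, k < j → Y j (z + A j) < Y k (z + A j) := by
        intro hstrict
        exact hzC ⟨hle, hstrict⟩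
      push_neg at hnotall
      obtain ⟨k, hkj, hnk⟩ := hnotall
      have heq : Y j (z + A j) = Y k (z + A j) := le_antisymm (hle k) hnk
      rw [hshift j j z, hshift j k z] at heq
      have heq2 : A.mulVec z j + G j j / 2 = A.mulVec z k + G k j - G k k / 2 := by
        linarith
      exact Set.mem_biUnion (Finset.mem_filter.mpr ⟨Finset.mem_univ k, hkj⟩) heq2
    refine measure_mono_null hsubU ?_
    refine (measure_biUnion_null_iff (Finset.countable_toSet _)).mpr fun k hk => ?_
    simp only [Finset.coe_filter, Finset.mem_univ, true_and, Set.mem_setOf_eq] at hk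
    exact htie j k (ne_of_gt hk)
  have hμT : ∀ j, μ {z | z + A j ∈ C j} = μ (T j) := by
    intro j
    refine le_antisymm (measure_mono (hsub j)) ?_
    calc μ (T j) ≤ μ ({z | z + A j ∈ C j} ∪ (T j \ {z | z + A j ∈ C j})) := by
          refine measure_mono fun z hz => ?_
          by_cases h : z ∈ {z | z + A j ∈ C j}
          · exact Or.inl h
          · exact Or.inr ⟨hz, h⟩
      _ ≤ μ {z | z + A j ∈ C j} + μ (T j \ {z | z + A j ∈ C j}) := measure_union_le _ _
      _ = μ {z | z + A j ∈ C j} := by rw [hdiffnull j, add_zero]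
  -- LHS
  have hFnn : 0 ≤ᵐ[μ] F := ae_of_all _ fun z => le_ciInf fun j => (Real.exp_pos _).le
  have hiInfC : ∀ {z : Fin d → ℝ} {j}, z ∈ C j → F z = Real.exp (Y j z) := by
    intro z j hz
    refine le_antisymm (ciInf_le ((Set.finite_range _).bddBelow) j)
      (le_ciInf fun k => Real.exp_le_exp.mpr (hz.1 k))
  have hdecomp : ∀ z, ENNReal.ofReal (F z)
      = ∑ j, (C j).indicator (fun z => ENNReal.ofReal (Real.exp (Y j z))) z := by
    intro z
    obtain ⟨j, hj⟩ := hmem z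
    rw [Finset.sum_eq_single j]
    · rw [Set.indicator_of_mem hj, hiInfC hj]
    · intro k _ hkj
      exact Set.indicator_of_notMem (fun hk => hkj (hdisj z k j hk hj)) _
    · intro h; exact absurd (Finset.mem_univ j) h
  have hLHS : (∫ ω, ⨅ j, Real.exp (A.mulVec (Z ω) j - (A * Aᵀ) j j / 2) ∂P)
      = (∑ j, μ (T j)).toReal := by
    have h1 : (∫ ω, ⨅ j, Real.exp (A.mulVec (Z ω) j - (A * Aᵀ) j j / 2) ∂P)
        = ∫ z, F z ∂μ := by
      rw [← hZ, integral_map hZmeas.aemeasurable hFmeas.aestronglyMeasurable]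
    rw [h1, integral_eq_lintegral_of_nonneg_ae hFnn hFmeas.aestronglyMeasurable]
    congr 1
    calc ∫⁻ z, ENNReal.ofReal (F z) ∂μ
        = ∫⁻ z, ∑ j, (C j).indicator
            (fun z => ENNReal.ofReal (Real.exp (Y j z))) z ∂μ := by
          exact lintegral_congr hdecomp
      _ = ∑ j, ∫⁻ z, (C j).indicator
            (fun z => ENNReal.ofReal (Real.exp (Y j z))) z ∂μ := by
          refine lintegral_finset_sum _ fun j _ => ?_
          exact (ENNReal.measurable_ofReal.comp
            (Real.measurable_exp.comp (hYmeas j))).indicator (hC j)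
      _ = ∑ j, ∫⁻ z in C j, ENNReal.ofReal (Real.exp (Y j z)) ∂μ := by
          exact Finset.sum_congr rfl fun j _ => lintegral_indicator (hC j) _
      _ = ∑ j, μ {z | z + A j ∈ C j} := Finset.sum_congr rfl fun j _ => hterm j
      _ = ∑ j, μ (T j) := Finset.sum_congr rfl fun j _ => hμT j
  rw [hLHS, ENNReal.toReal_sum (fun j _ => measure_ne_top μ (T j))]
  refine Finset.sum_congr rfl fun j _ => ?_
  congr 1
  have hpre : {ω | ∀ k, k ≠ j →
      A.mulVec (Z ω) j + (A * Aᵀ) j j / 2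
        ≤ A.mulVec (Z ω) k + (A * Aᵀ) k j - (A * Aᵀ) k k / 2} = Z ⁻¹' (T j) := rfl
  rw [hpre, ← Measure.map_apply hZmeas (hT j), hZ, hμ]
end

section
/- Let (T, ρ) be a compact metric space, (Ω, 𝓕, P) a probability space, and U : T → Ω → ℝ a stochastic process such that for every ω ∈ Ω the sample path t ↦ U(t)(ω) is continuous and for every t ∈ T the random variable U(t) is uniformly distributed on the interval (0,1). Assume that for all s, t ∈ T and all x, y ∈ [0,∞) the bivariate tail-copula limit R_{(s,t)}(x,y) = lim_{u↓0} u⁻¹ P[U(s) ≤ u·x, U(t) ≤ u·y] exists. Assume moreover there exist positive scalars c₁, c₂, u₀, ε₀ and, for every ε ∈ (0, ε₀], a scalar δ(ε) > 0, such that for all (u, ε, s) ∈ (0,u₀] × (0,ε₀] × T: P[ sup_{t : ρ(s,t) ≤ δ(ε)} U(t) > u·exp(c₁ε²) | inf_{t : ρ(s,t) ≤ δ(ε)} U(t) ≤ u ] ≤ c₂·ε². Then for every η > 0 there exists δ > 0 such that for all (s, t) ∈ T² with ρ(s,t) < δ one has 1 − R_{(s,t)}(1,1) < η. -/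
open MeasureTheory Filter Set Topology

/-- Corollary (under the covering-by-balls condition, nearby points have tail
dependence coefficient close to one). -/
theorem empirical_tail_copulas_stmt11
    {Ω : Type*} [MeasurableSpace Ω] (P : Measure Ω) [IsProbabilityMeasure P]
    {T : Type*} [MetricSpace T] [CompactSpace T] [Nonempty T]
    (U : T → Ω → ℝ)
    (hcont : ∀ ω : Ω, Continuous fun t => U t ω)
    (hunif : ∀ t : T, ∀ x ∈ Icc (0:ℝ) 1, P {ω | U t ω ≤ x} = ENNReal.ofReal x)
    (R : T → T → ℝ → ℝ → ℝ)
    (hR : ∀ (s t : T) (x y : ℝ), 0 ≤ x → 0 ≤ y →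
      Tendsto (fun u : ℝ => (P {ω | U s ω ≤ u * x ∧ U t ω ≤ u * y}).toReal / u)
        (𝓝[>] (0:ℝ)) (𝓝 (R s t x y)))
    (c₁ c₂ u₀ ε₀ : ℝ) (hc₁ : 0 < c₁) (hc₂ : 0 < c₂) (hu₀ : 0 < u₀) (hε₀ : 0 < ε₀)
    (δf : ℝ → ℝ) (hδf : ∀ ε ∈ Ioc (0:ℝ) ε₀, 0 < δf ε)
    (hcond : ∀ u ∈ Ioc (0:ℝ) u₀, ∀ ε ∈ Ioc (0:ℝ) ε₀, ∀ s : T,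
      (P ({ω | u * Real.exp (c₁ * ε ^ 2) < ⨆ t : {t : T // dist s t ≤ δf ε}, U t.1 ω}
          ∩ {ω | (⨅ t : {t : T // dist s t ≤ δf ε}, U t.1 ω) ≤ u})).toReal
        / (P {ω | (⨅ t : {t : T // dist s t ≤ δf ε}, U t.1 ω) ≤ u}).toReal
      ≤ c₂ * ε ^ 2) :
    ∀ η > (0:ℝ), ∃ δ > (0:ℝ), ∀ s t : T, dist s t < δ → 1 - R s t 1 1 < η := by
  intro η hη
  -- Choose ε small enough
  have htend : Tendsto (fun ε : ℝ => 1 - Real.exp (-(c₁ * ε ^ 2)) * (1 - c₂ * ε ^ 2))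
      (𝓝[>] (0:ℝ)) (𝓝 0) := by
    have hC : Continuous fun ε : ℝ => 1 - Real.exp (-(c₁ * ε ^ 2)) * (1 - c₂ * ε ^ 2) :=
      continuous_const.sub
        ((Real.continuous_exp.comp
            ((continuous_const.mul (continuous_pow 2)).neg)).mul
          (continuous_const.sub (continuous_const.mul (continuous_pow 2))))
    have h0 : (1 - Real.exp (-(c₁ * (0:ℝ) ^ 2)) * (1 - c₂ * (0:ℝ) ^ 2)) = 0 := by simp
    simpa [h0] using (hC.tendsto 0).mono_left nhdsWithin_le_nhds
  have hev : ∀ᶠ ε in 𝓝[>] (0:ℝ),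
      (1 - Real.exp (-(c₁ * ε ^ 2)) * (1 - c₂ * ε ^ 2)) < min η 1 :=
    htend.eventually_lt_const (lt_min hη one_pos)
  have hIoc : Ioc (0:ℝ) ε₀ ∈ 𝓝[>] (0:ℝ) := Ioc_mem_nhdsGT_of_mem ⟨le_refl 0, hε₀⟩
  obtain ⟨ε, hεb, hεIoc⟩ := (hev.and (eventually_of_mem hIoc fun x hx => hx)).exists
  have hεpos : 0 < ε := hεIoc.1
  have hexp0 : (0:ℝ) < Real.exp (-(c₁ * ε ^ 2)) := Real.exp_pos _
  have hc2ε : 1 - c₂ * ε ^ 2 > 0 := by nlinarith [min_le_right η 1]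
  refine ⟨δf ε, hδf ε hεIoc, ?_⟩
  intro s t hst
  have hss : dist s s ≤ δf ε := by simp [(hδf ε hεIoc).le]
  have hst' : dist s t ≤ δf ε := hst.le
  haveI hne : Nonempty {t' : T // dist s t' ≤ δf ε} := ⟨⟨s, hss⟩⟩
  -- compactness of the ball, for boundedness of sup/inf
  have hcomp : IsCompact {t' : T | dist s t' ≤ δf ε} :=
    (isClosed_le (continuous_const.dist continuous_id) continuous_const).isCompact
  have hrange : ∀ ω : Ω, Set.range (fun t' : {t' : T // dist s t' ≤ δf ε} => U t'.1 ω)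
      = (fun t' => U t' ω) '' {t' : T | dist s t' ≤ δf ε} := by
    intro ω
    ext x
    simp only [Set.mem_range, Set.mem_image, Subtype.exists, Set.mem_setOf_eq]
    constructor
    · rintro ⟨a, ha, rfl⟩; exact ⟨a, ha, rfl⟩
    · rintro ⟨a, ha, rfl⟩; exact ⟨a, ha, rfl⟩
  have hbddA : ∀ ω : Ω, BddAbove
      (Set.range fun t' : {t' : T // dist s t' ≤ δf ε} => U t'.1 ω) := by
    intro ω; rw [hrange ω]; exact (hcomp.image (hcont ω)).bddAbove
  have hbddB : ∀ ω : Ω, BddBelow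
      (Set.range fun t' : {t' : T // dist s t' ≤ δf ε} => U t'.1 ω) := by
    intro ω; rw [hrange ω]; exact (hcomp.image (hcont ω)).bddBelow
  -- The key lower bound for small v
  have hvbd : (0:ℝ) < min u₀ 1 * Real.exp (c₁ * ε ^ 2) := by positivity
  have key : ∀ v ∈ Ioc (0:ℝ) (min u₀ 1 * Real.exp (c₁ * ε ^ 2)),
      (1 - c₂ * ε ^ 2) * Real.exp (-(c₁ * ε ^ 2)) ≤
        (P {ω | U s ω ≤ v * 1 ∧ U t ω ≤ v * 1}).toReal / v := by
    intro v hv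
    obtain ⟨hv0, hv1⟩ := hv
    set u : ℝ := v * Real.exp (-(c₁ * ε ^ 2)) with hu_def
    have hu0 : 0 < u := by positivity
    have hexps : Real.exp (c₁ * ε ^ 2) * Real.exp (-(c₁ * ε ^ 2)) = 1 := by
      rw [← Real.exp_add]; simp
    have hu_le : u ≤ min u₀ 1 := by
      calc u ≤ (min u₀ 1 * Real.exp (c₁ * ε ^ 2)) * Real.exp (-(c₁ * ε ^ 2)) :=
              mul_le_mul_of_nonneg_right hv1 hexp0.le
        _ = min u₀ 1 := by rw [mul_assoc, hexps, mul_one]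
    have huu₀ : u ≤ u₀ := hu_le.trans (min_le_left _ _)
    have hu1 : u ≤ 1 := hu_le.trans (min_le_right _ _)
    have huv : u * Real.exp (c₁ * ε ^ 2) = v := by
      rw [hu_def, mul_assoc, mul_comm (Real.exp _), hexps, mul_one]
    set A : Set Ω := {ω | U s ω ≤ v ∧ U t ω ≤ v} with hA_def
    set B : Set Ω := {ω | (⨅ t' : {t' : T // dist s t' ≤ δf ε}, U t'.1 ω) ≤ u} with hB_def
    set C : Set Ω := {ω | u * Real.exp (c₁ * ε ^ 2) <
        ⨆ t' : {t' : T // dist s t' ≤ δf ε}, U t'.1 ω} with hC_def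
    have hBsub : B ⊆ A ∪ (C ∩ B) := by
      intro ω hω
      by_cases hc : u * Real.exp (c₁ * ε ^ 2) <
          ⨆ t' : {t' : T // dist s t' ≤ δf ε}, U t'.1 ω
      · exact Or.inr ⟨hc, hω⟩
      · push_neg at hc
        rw [huv] at hc
        refine Or.inl ⟨?_, ?_⟩
        · exact le_trans (le_ciSup (hbddA ω) ⟨s, hss⟩) hc
        · exact le_trans (le_ciSup (hbddA ω) ⟨t, hst'⟩) hc
    -- P B ≥ u
    have hPBge : u ≤ (P B).toReal := by
      have hsubB : {ω | U s ω ≤ u} ⊆ B := by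
        intro ω hω
        exact le_trans (ciInf_le (hbddB ω) ⟨s, hss⟩) hω
      have h1 : ENNReal.ofReal u ≤ P B := by
        rw [← hunif s u ⟨hu0.le, hu1⟩]
        exact measure_mono hsubB
      have h2 := (ENNReal.toReal_le_toReal ENNReal.ofReal_ne_top (measure_ne_top P B)).mpr h1
      rwa [ENNReal.toReal_ofReal hu0.le] at h2
    have hPBpos : 0 < (P B).toReal := lt_of_lt_of_le hu0 hPBge
    -- conditional bound
    have hCB : (P (C ∩ B)).toReal ≤ c₂ * ε ^ 2 * (P B).toReal := by
      have := hcond u ⟨hu0, huu₀⟩ ε hεIoc s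
      exact (div_le_iff₀ hPBpos).mp this
    -- subadditivity
    have hsplit : (P B).toReal ≤ (P A).toReal + (P (C ∩ B)).toReal := by
      have h1 : P B ≤ P A + P (C ∩ B) :=
        le_trans (measure_mono hBsub) (measure_union_le _ _)
      have h2 : (P B).toReal ≤ (P A + P (C ∩ B)).toReal :=
        (ENNReal.toReal_le_toReal (measure_ne_top P B)
          (by finiteness)).mpr h1
      rwa [ENNReal.toReal_add (measure_ne_top P A) (measure_ne_top P _)] at h2
    have hPA : (1 - c₂ * ε ^ 2) * u ≤ (P A).toReal := by
      have h3 : (1 - c₂ * ε ^ 2) * u ≤ (1 - c₂ * ε ^ 2) * (P B).toReal :=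
        mul_le_mul_of_nonneg_left hPBge hc2ε.le
      nlinarith
    have hAeq : {ω | U s ω ≤ v * 1 ∧ U t ω ≤ v * 1} = A := by
      simp only [mul_one, hA_def]
    rw [hAeq, le_div_iff₀ hv0]
    calc (1 - c₂ * ε ^ 2) * Real.exp (-(c₁ * ε ^ 2)) * v
        = (1 - c₂ * ε ^ 2) * u := by rw [hu_def]; ring
      _ ≤ (P A).toReal := hPA
  -- take the limit
  have hRge : (1 - c₂ * ε ^ 2) * Real.exp (-(c₁ * ε ^ 2)) ≤ R s t 1 1 := by
    refine ge_of_tendsto (hR s t 1 1 zero_le_one zero_le_one) ?_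
    filter_upwards [Ioc_mem_nhdsGT_of_mem ⟨le_refl 0, hvbd⟩] with v hv
    exact key v hv
  have : 1 - Real.exp (-(c₁ * ε ^ 2)) * (1 - c₂ * ε ^ 2) < η :=
    lt_of_lt_of_le hεb (min_le_left η 1)
  nlinarith [hRge]
end

section
/- Let (T, ρ) be a compact metric space, (Ω, 𝓕, P) a probability space, and U : T → Ω → ℝ a stochastic process such that for every ω ∈ Ω the sample path t ↦ U(t)(ω) is continuous and for every t ∈ T the random variable U(t) is uniformly distributed on the interval (0,1). Assume that for every integer m ≥ 1, every t ∈ T^m and every x ∈ [0,∞)^m the tail-copula limit R_t(x) = lim_{s↓0} s⁻¹ P[U(t₁) ≤ s·x₁, …, U(t_m) ≤ s·x_m] exists. Assume moreover there exist positive scalars c₁, c₂, u₀, ε₀ and, for every ε ∈ (0, ε₀], a scalar δ(ε) > 0, such that for all (u, ε, s) ∈ (0,u₀] × (0,ε₀] × T: P[ sup_{t : ρ(s,t) ≤ δ(ε)} U(t) > u·exp(c₁ε²) | inf_{t : ρ(s,t) ≤ δ(ε)} U(t) ≤ u ] ≤ c₂·ε². Then for every d ≥ 1 the map (t, x) ↦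 R_t(x) is jointly continuous on T^d × [0,∞)^d, where T^d × [0,∞)^d carries the product topology induced by the metric ρ on each T-factor and the absolute value metric on each [0,∞)-factor. -/
open MeasureTheory Filter Set Topology

lemma tail_ball_bdd {T : Type*} [MetricSpace T] [CompactSpace T] {f : T → ℝ}
    (hf : Continuous f) (a : T) (δ : ℝ) :
    BddAbove (Set.range fun t : {t : T // dist a t ≤ δ} => f t.1) ∧
    BddBelow (Set.range fun t : {t : T // dist a t ≤ δ} => f t.1) := by
  have hK : IsCompact {t : T | dist a t ≤ δ} :=
    (isClosed_le (continuous_const.dist continuous_id) continuous_const).isCompact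
  have hrange : (Set.range fun t : {t : T // dist a t ≤ δ} => f t.1)
      = f '' {t : T | dist a t ≤ δ} := by
    ext y
    constructor
    · rintro ⟨⟨t, ht⟩, rfl⟩; exact ⟨t, ht, rfl⟩
    · rintro ⟨t, ht, rfl⟩; exact ⟨⟨t, ht⟩, rfl⟩
  rw [hrange]
  exact ⟨(hK.image hf).bddAbove, (hK.image hf).bddBelow⟩

set_option maxHeartbeats 1000000 in
/-- Corollary (joint continuity of the tail copula `(t, x) ↦ R_t(x)` on
`T^d × [0,∞)^d` under the covering-by-balls condition). -/
theorem empirical_tail_copulas_stmt12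
    {Ω : Type*} [MeasurableSpace Ω] (P : Measure Ω) [IsProbabilityMeasure P]
    {T : Type*} [MetricSpace T] [CompactSpace T] [Nonempty T]
    (U : T → Ω → ℝ)
    (hcont : ∀ ω : Ω, Continuous fun t => U t ω)
    (hunif : ∀ t : T, ∀ x ∈ Icc (0:ℝ) 1, P {ω | U t ω ≤ x} = ENNReal.ofReal x)
    (R : ∀ m : ℕ, (Fin m → T) → (Fin m → ℝ) → ℝ)
    (hR : ∀ m : ℕ, 1 ≤ m → ∀ (t : Fin m → T) (x : Fin m → ℝ), (∀ j, 0 ≤ x j) →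
      Tendsto (fun s : ℝ => (P {ω | ∀ j, U (t j) ω ≤ s * x j}).toReal / s)
        (𝓝[>] (0:ℝ)) (𝓝 (R m t x)))
    (c₁ c₂ u₀ ε₀ : ℝ) (hc₁ : 0 < c₁) (hc₂ : 0 < c₂) (hu₀ : 0 < u₀) (hε₀ : 0 < ε₀)
    (δf : ℝ → ℝ) (hδf : ∀ ε ∈ Ioc (0:ℝ) ε₀, 0 < δf ε)
    (hcond : ∀ u ∈ Ioc (0:ℝ) u₀, ∀ ε ∈ Ioc (0:ℝ) ε₀, ∀ s : T,
      (P ({ω | u * Real.exp (c₁ * ε ^ 2) < ⨆ t : {t : T // dist s t ≤ δf ε}, U t.1 ω}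
          ∩ {ω | (⨅ t : {t : T // dist s t ≤ δf ε}, U t.1 ω) ≤ u})).toReal
        / (P {ω | (⨅ t : {t : T // dist s t ≤ δf ε}, U t.1 ω) ≤ u}).toReal
      ≤ c₂ * ε ^ 2) :
    ∀ d : ℕ, 1 ≤ d →
      ContinuousOn (fun p : (Fin d → T) × (Fin d → ℝ) => R d p.1 p.2)
        {p : (Fin d → T) × (Fin d → ℝ) | ∀ j, 0 ≤ p.2 j} := by
  intro d hd
  -- conditional probability in product form
  have hcond' : ∀ u ∈ Ioc (0:ℝ) u₀, ∀ ε ∈ Ioc (0:ℝ) ε₀, ∀ a : T,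
      (P ({ω | u * Real.exp (c₁ * ε ^ 2) < ⨆ t : {t : T // dist a t ≤ δf ε}, U t.1 ω}
          ∩ {ω | (⨅ t : {t : T // dist a t ≤ δf ε}, U t.1 ω) ≤ u})).toReal
        ≤ c₂ * ε ^ 2 *
          (P {ω | (⨅ t : {t : T // dist a t ≤ δf ε}, U t.1 ω) ≤ u}).toReal := by
    intro u hu ε hε a
    set A := ({ω | u * Real.exp (c₁ * ε ^ 2) < ⨆ t : {t : T // dist a t ≤ δf ε}, U t.1 ω}
          ∩ {ω | (⨅ t : {t : T // dist a t ≤ δf ε}, U t.1 ω) ≤ u}) with hA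
    set I := {ω | (⨅ t : {t : T // dist a t ≤ δf ε}, U t.1 ω) ≤ u} with hI
    have hAI : A ⊆ I := inter_subset_right
    rcases eq_or_lt_of_le (ENNReal.toReal_nonneg (a := P I)) with h0 | hpos
    · have : (P A).toReal ≤ (P I).toReal :=
        ENNReal.toReal_mono (measure_ne_top P _) (measure_mono hAI)
      rw [← h0] at this ⊢
      nlinarith [this, ENNReal.toReal_nonneg (a := P A)]
    · have := hcond u hu ε hε a
      rw [div_le_iff₀ hpos] at this
      exact this
  -- the ball probability bound
  have hball : ∀ ε ∈ Ioc (0:ℝ) ε₀, c₂ * ε ^ 2 ≤ 1/2 → ∀ u ∈ Ioc (0:ℝ) u₀,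
      u * Real.exp (c₁ * ε ^ 2) ≤ 1 → ∀ a : T,
      (P {ω | (⨅ t : {t : T // dist a t ≤ δf ε}, U t.1 ω) ≤ u}).toReal
        ≤ u * Real.exp (c₁ * ε ^ 2) / (1 - c₂ * ε ^ 2) := by
    intro ε hε hhalf u hu hue a
    obtain ⟨hε1, hε2⟩ := hε
    obtain ⟨hu1, hu2⟩ := hu
    have hδ0 : 0 ≤ δf ε := (hδf ε ⟨hε1, hε2⟩).le
    set c := c₁ * ε ^ 2 with hc
    set k := c₂ * ε ^ 2 with hk
    have hkpos : 0 < k := by positivity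
    set I := {ω | (⨅ t : {t : T // dist a t ≤ δf ε}, U t.1 ω) ≤ u} with hI
    set S := {ω | u * Real.exp c < ⨆ t : {t : T // dist a t ≤ δf ε}, U t.1 ω} with hS
    have hsub : I ⊆ {ω | U a ω ≤ u * Real.exp c} ∪ (S ∩ I) := by
      intro ω hω
      by_cases h : U a ω ≤ u * Real.exp c
      · exact Or.inl h
      · push_neg at h
        refine Or.inr ⟨?_, hω⟩
        have hb := (tail_ball_bdd (hcont ω) a (δf ε)).1
        have : U a ω ≤ ⨆ t : {t : T // dist a t ≤ δf ε}, U t.1 ω :=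
          le_ciSup hb ⟨a, by simpa using hδ0⟩
        exact lt_of_lt_of_le h this
    have h1 : (P I).toReal ≤ (P {ω | U a ω ≤ u * Real.exp c}).toReal + (P (S ∩ I)).toReal := by
      have : P I ≤ P {ω | U a ω ≤ u * Real.exp c} + P (S ∩ I) :=
        (measure_mono hsub).trans (measure_union_le _ _)
      calc (P I).toReal ≤ (P {ω | U a ω ≤ u * Real.exp c} + P (S ∩ I)).toReal :=
            ENNReal.toReal_mono (by simp [ENNReal.add_ne_top, measure_ne_top]) this
        _ = _ := ENNReal.toReal_add (measure_ne_top P _) (measure_ne_top P _)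
    have h2 : (P {ω | U a ω ≤ u * Real.exp c}).toReal = u * Real.exp c := by
      rw [hunif a (u * Real.exp c) ⟨by positivity, hue⟩, ENNReal.toReal_ofReal (by positivity)]
    have h3 : (P (S ∩ I)).toReal ≤ k * (P I).toReal := hcond' u ⟨hu1, hu2⟩ ε ⟨hε1, hε2⟩ a
    set q := (P I).toReal with hq
    have : q * (1 - k) ≤ u * Real.exp c := by nlinarith [h1, h2, h3]
    rw [le_div_iff₀ (by linarith : (0:ℝ) < 1 - k)]
    linarith [this]
  -- nonnegativity of R
  have hnonneg : ∀ (t : Fin d → T) (x : Fin d → ℝ), (∀ j, 0 ≤ x j) → 0 ≤ R d t x := by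
    intro t x hx
    refine ge_of_tendsto (hR d hd t x hx) ?_
    filter_upwards [self_mem_nhdsWithin] with s hs
    have hs' : (0:ℝ) < s := hs
    exact div_nonneg ENNReal.toReal_nonneg hs'.le
  -- R is bounded by each coordinate
  have hle : ∀ (t : Fin d → T) (x : Fin d → ℝ), (∀ j, 0 ≤ x j) → ∀ j, R d t x ≤ x j := by
    intro t x hx j
    refine le_of_tendsto (hR d hd t x hx) ?_
    have hmem : Ioc (0:ℝ) (x j + 1)⁻¹ ∈ 𝓝[>] (0:ℝ) :=
      Ioc_mem_nhdsGT_of_mem ⟨le_refl _, by have := hx j; positivity⟩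
    filter_upwards [hmem] with s hs
    obtain ⟨hs0, hs1⟩ := hs
    have hxj1 : s * x j ≤ 1 := by
      have h1 : s * x j ≤ (x j + 1)⁻¹ * x j := by
        have := hx j; nlinarith
      have h2 : (x j + 1)⁻¹ * x j ≤ 1 := by
        rw [inv_mul_le_iff₀ (by linarith [hx j])]; linarith [hx j]
      linarith
    have hsub : {ω | ∀ j', U (t j') ω ≤ s * x j'} ⊆ {ω | U (t j) ω ≤ s * x j} :=
      fun ω hω => hω j
    have hP : (P {ω | ∀ j', U (t j') ω ≤ s * x j'}).toReal ≤ s * x j := by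
      have h := ENNReal.toReal_mono (measure_ne_top P _) (measure_mono hsub)
      rwa [hunif (t j) (s * x j) ⟨mul_nonneg hs0.le (hx j), hxj1⟩,
        ENNReal.toReal_ofReal (mul_nonneg hs0.le (hx j))] at h
    rw [div_le_iff₀ hs0]
    nlinarith [hP]
  -- monotonicity of R in x
  have hmono : ∀ (t : Fin d → T) (x y : Fin d → ℝ), (∀ j, 0 ≤ x j) → (∀ j, 0 ≤ y j) →
      (∀ j, x j ≤ y j) → R d t x ≤ R d t y := by
    intro t x y hx hy hxy
    refine le_of_tendsto_of_tendsto (hR d hd t x hx) (hR d hd t y hy) ?_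
    filter_upwards [self_mem_nhdsWithin] with s hs
    have hs' : (0:ℝ) < s := hs
    have hsub : {ω | ∀ j, U (t j) ω ≤ s * x j} ⊆ {ω | ∀ j, U (t j) ω ≤ s * y j} := by
      intro ω hω j
      exact (hω j).trans (by nlinarith [hxy j])
    have h := ENNReal.toReal_mono (measure_ne_top P _) (measure_mono hsub)
    gcongr
  -- homogeneity of R in x
  have hhom : ∀ (t : Fin d → T) (x : Fin d → ℝ), (∀ j, 0 ≤ x j) → ∀ lam : ℝ, 0 < lam →
      R d t (fun j => lam * x j) = lam * R d t x := by
    intro t x hx lam hlam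
    have h1 : Tendsto (fun s : ℝ => s * lam) (𝓝[>] (0:ℝ)) (𝓝[>] (0:ℝ)) := by
      apply tendsto_nhdsWithin_of_tendsto_nhds_of_eventually_within
      · have h : Tendsto (fun s : ℝ => s * lam) (𝓝 (0:ℝ)) (𝓝 ((0:ℝ) * lam)) :=
          (continuous_id.mul continuous_const).tendsto 0
        simpa using h.mono_left (nhdsWithin_le_nhds (s := Ioi (0:ℝ)))
      · filter_upwards [self_mem_nhdsWithin] with s hs
        exact mul_pos hs hlam
    have h2 := (hR d hd t x hx).comp h1
    have h3 := h2.const_mul lam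
    have h4 : Tendsto (fun s : ℝ => (P {ω | ∀ j, U (t j) ω ≤ s * (lam * x j)}).toReal / s)
        (𝓝[>] (0:ℝ)) (𝓝 (lam * R d t x)) := by
      refine h3.congr' ?_
      filter_upwards [self_mem_nhdsWithin] with s hs
      have hs' : (0:ℝ) < s := hs
      show lam * ((P {ω | ∀ j, U (t j) ω ≤ (s * lam) * x j}).toReal / (s * lam)) = _
      have hset : {ω | ∀ j, U (t j) ω ≤ (s * lam) * x j}
          = {ω | ∀ j, U (t j) ω ≤ s * (lam * x j)} := by
        ext ω; simp only [Set.mem_setOf_eq, mul_assoc]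
      rw [hset]
      field_simp
    exact tendsto_nhds_unique
      (hR d hd t (fun j => lam * x j) (fun j => mul_nonneg hlam.le (hx j))) h4
  -- the key comparison lemma for nearby tuples of points
  have hB : ∀ ε : ℝ, 0 < ε → ε ≤ ε₀ → c₂ * ε ^ 2 ≤ 1/2 →
      ∀ (t t' : Fin d → T), (∀ j, dist (t j) (t' j) ≤ δf ε) →
      ∀ (x : Fin d → ℝ), (∀ j, 0 ≤ x j) →
      R d t' x ≤ Real.exp (c₁ * ε ^ 2) * R d t x
        + (c₂ * ε ^ 2 * Real.exp (c₁ * ε ^ 2) / (1 - c₂ * ε ^ 2)) * ∑ j, x j := by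
    intro ε hε1 hε2 hhalf t t' hclose x hx
    set c := c₁ * ε ^ 2 with hc
    set k := c₂ * ε ^ 2 with hk
    set ec := Real.exp c with hec
    have hecpos : 0 < ec := Real.exp_pos c
    have hec1 : 1 ≤ ec := Real.one_le_exp (by positivity)
    have hkpos : 0 < k := by rw [hk]; positivity
    set M := ∑ j, x j with hM
    have hM0 : 0 ≤ M := Finset.sum_nonneg fun j _ => hx j
    have hxM : ∀ j, x j ≤ M := fun j =>
      Finset.single_le_sum (fun i _ => hx i) (Finset.mem_univ j)
    set b := min (u₀ / (M + 1)) (1 / ((M + 1) * ec)) with hb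
    have hbpos : 0 < b := lt_min (by positivity) (by positivity)
    set K := k * ec / (1 - k) with hK
    have hev : ∀ᶠ s in 𝓝[>] (0:ℝ),
        (P {ω | ∀ j, U (t' j) ω ≤ s * x j}).toReal / s
        ≤ (P {ω | ∀ j, U (t j) ω ≤ s * (ec * x j)}).toReal / s + K * M := by
      have hmem : Ioc (0:ℝ) b ∈ 𝓝[>] (0:ℝ) := Ioc_mem_nhdsGT_of_mem ⟨le_refl _, hbpos⟩
      filter_upwards [hmem] with s hs
      obtain ⟨hs0, hsb⟩ := hs
      have hu1 : ∀ j, s * x j ≤ u₀ := by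
        intro j
        have h1 : s * x j ≤ b * (M + 1) := by nlinarith [hxM j, hx j]
        have h2 : b * (M + 1) ≤ u₀ := by
          have h3 := min_le_left (u₀ / (M + 1)) (1 / ((M + 1) * ec))
          rw [← hb] at h3
          calc b * (M + 1) ≤ (u₀ / (M + 1)) * (M + 1) :=
                mul_le_mul_of_nonneg_right h3 (by linarith)
            _ = u₀ := by field_simp
        linarith
      have hu2 : ∀ j, s * x j * ec ≤ 1 := by
        intro j
        have h0 : s * x j ≤ b * (M + 1) := by nlinarith [hxM j, hx j]
        have h1 : s * x j * ec ≤ b * (M + 1) * ec :=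
          mul_le_mul_of_nonneg_right h0 hecpos.le
        have h2 : b * (M + 1) * ec ≤ 1 := by
          have h3 := min_le_right (u₀ / (M + 1)) (1 / ((M + 1) * ec))
          rw [← hb] at h3
          calc b * (M + 1) * ec ≤ (1 / ((M + 1) * ec)) * (M + 1) * ec :=
                mul_le_mul_of_nonneg_right
                  (mul_le_mul_of_nonneg_right h3 (by linarith)) hecpos.le
            _ = 1 := by field_simp
        linarith
      set D := fun j : Fin d => {ω | U (t' j) ω ≤ s * x j ∧ s * (ec * x j) < U (t j) ω}
        with hD
      have hsub : {ω | ∀ j, U (t' j) ω ≤ s * x j}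
          ⊆ {ω | ∀ j, U (t j) ω ≤ s * (ec * x j)} ∪ ⋃ j, D j := by
        intro ω hω
        by_cases hB' : ∀ j, U (t j) ω ≤ s * (ec * x j)
        · exact Or.inl hB'
        · push_neg at hB'
          obtain ⟨j, hj⟩ := hB'
          exact Or.inr (Set.mem_iUnion.mpr ⟨j, hω j, hj⟩)
      have hDj : ∀ j, (P (D j)).toReal ≤ k * (s * x j * ec / (1 - k)) := by
        intro j
        rcases eq_or_lt_of_le (hx j) with h0 | hxj
        · have hsubj : D j ⊆ {ω | U (t' j) ω ≤ (0:ℝ)} := by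
            intro ω hω
            have h1 := hω.1
            rw [← h0, mul_zero] at h1
            exact h1
          have hP := ENNReal.toReal_mono (measure_ne_top P _) (measure_mono hsubj)
          rw [hunif (t' j) 0 ⟨le_refl _, by norm_num⟩] at hP
          simp only [ENNReal.ofReal_zero, ENNReal.toReal_zero] at hP
          rw [← h0]
          simpa using hP
        · set u := s * x j with hu
          have hu0 : 0 < u := mul_pos hs0 hxj
          have huu : u ≤ u₀ := hu1 j
          have huec : u * ec ≤ 1 := hu2 j
          have hsubj : D j ⊆
              ({ω | u * Real.exp c < ⨆ τ : {τ : T // dist (t j) τ ≤ δf ε}, U τ.1 ω}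
              ∩ {ω | (⨅ τ : {τ : T // dist (t j) τ ≤ δf ε}, U τ.1 ω) ≤ u}) := by
            intro ω hω
            obtain ⟨h1, h2⟩ := hω
            constructor
            · have hbdd := (tail_ball_bdd (hcont ω) (t j) (δf ε)).1
              have h3 : U (t j) ω ≤ ⨆ τ : {τ : T // dist (t j) τ ≤ δf ε}, U τ.1 ω :=
                le_ciSup hbdd ⟨t j, by simpa using (hδf ε ⟨hε1, hε2⟩).le⟩
              have h4 : u * Real.exp c = s * (ec * x j) := by rw [← hec]; ring
              show u * Real.exp c < _
              rw [h4]
              exact lt_of_lt_of_le h2 h3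
            · have hbdd := (tail_ball_bdd (hcont ω) (t j) (δf ε)).2
              have h3 : (⨅ τ : {τ : T // dist (t j) τ ≤ δf ε}, U τ.1 ω) ≤ U (t' j) ω :=
                ciInf_le hbdd ⟨t' j, hclose j⟩
              exact h3.trans h1
          have step1 := ENNReal.toReal_mono (measure_ne_top P _) (measure_mono hsubj)
          have step2 := hcond' u ⟨hu0, huu⟩ ε ⟨hε1, hε2⟩ (t j)
          have step3 := hball ε ⟨hε1, hε2⟩ hhalf u ⟨hu0, huu⟩ (by rw [← hec]; exact huec) (t j)
          calc (P (D j)).toReal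
              ≤ k * (P {ω | (⨅ τ : {τ : T // dist (t j) τ ≤ δf ε}, U τ.1 ω) ≤ u}).toReal :=
                step1.trans step2
            _ ≤ k * (u * Real.exp c / (1 - k)) :=
                mul_le_mul_of_nonneg_left step3 hkpos.le
            _ = k * (s * x j * ec / (1 - k)) := by rw [← hec, hu]
      have hPA : (P {ω | ∀ j, U (t' j) ω ≤ s * x j}).toReal
          ≤ (P {ω | ∀ j, U (t j) ω ≤ s * (ec * x j)}).toReal + ∑ j, (P (D j)).toReal := by
        have h1 : P {ω | ∀ j, U (t' j) ω ≤ s * x j}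
            ≤ P {ω | ∀ j, U (t j) ω ≤ s * (ec * x j)} + ∑ j, P (D j) := by
          refine (measure_mono hsub).trans ((measure_union_le _ _).trans ?_)
          gcongr
          exact measure_iUnion_fintype_le P D
        have hne : (∑ j, P (D j)) ≠ ⊤ :=
          (ENNReal.sum_lt_top.mpr fun j _ => (measure_lt_top P _)).ne
        have h2 := ENNReal.toReal_mono
          (by exact ENNReal.add_ne_top.mpr ⟨measure_ne_top P _, hne⟩) h1
        rwa [ENNReal.toReal_add (measure_ne_top P _) hne,
          ENNReal.toReal_sum (fun j _ => measure_ne_top P _)] at h2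
      have hsum : ∑ j, (P (D j)).toReal ≤ s * (K * M) := by
        calc ∑ j, (P (D j)).toReal ≤ ∑ j, k * (s * x j * ec / (1 - k)) :=
              Finset.sum_le_sum fun j _ => hDj j
          _ = ∑ j, s * (K * x j) := by
              refine Finset.sum_congr rfl fun j _ => ?_
              rw [hK]; ring
          _ = s * (K * M) := by rw [hM, ← Finset.mul_sum, ← Finset.mul_sum]
      calc (P {ω | ∀ j, U (t' j) ω ≤ s * x j}).toReal / s
          ≤ ((P {ω | ∀ j, U (t j) ω ≤ s * (ec * x j)}).toReal + s * (K * M)) / s := by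
            gcongr
            linarith [hPA, hsum]
        _ = (P {ω | ∀ j, U (t j) ω ≤ s * (ec * x j)}).toReal / s + K * M := by
            rw [add_div, mul_div_cancel_left₀ _ (ne_of_gt hs0)]
    have hx' : ∀ j, 0 ≤ ec * x j := fun j => mul_nonneg hecpos.le (hx j)
    have hlim2 := (hR d hd t (fun j => ec * x j) hx').add_const (K * M)
    have hfin := le_of_tendsto_of_tendsto (hR d hd t' x hx) hlim2 hev
    rw [hhom t x hx ec hecpos] at hfin
    calc R d t' x ≤ ec * R d t x + K * M := hfin
      _ = Real.exp (c₁ * ε ^ 2) * R d t x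
          + (c₂ * ε ^ 2 * Real.exp (c₁ * ε ^ 2) / (1 - c₂ * ε ^ 2)) * ∑ j, x j := by
        rw [hK, hM, hec, hc, hk]
  -- final: joint continuity
  intro p hp
  have hp' : ∀ j, 0 ≤ p.2 j := hp
  have hcw : ContinuousWithinAt (fun p : (Fin d → T) × (Fin d → ℝ) => R d p.1 p.2)
      {p : (Fin d → T) × (Fin d → ℝ) | ∀ j, 0 ≤ p.2 j} p := by
    rw [ContinuousWithinAt, Metric.tendsto_nhdsWithin_nhds]
    intro η hη
    by_cases h0 : ∃ j, p.2 j = 0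
    · -- some coordinate of the limit point vanishes
      obtain ⟨j, hj⟩ := h0
      have hRp : R d p.1 p.2 = 0 := by
        refine le_antisymm ?_ (hnonneg p.1 p.2 hp')
        have := hle p.1 p.2 hp' j
        rwa [hj] at this
      refine ⟨η, hη, ?_⟩
      intro q hq hdist
      have hq' : ∀ j, 0 ≤ q.2 j := hq
      have h1 : q.2 j < η := by
        have h2 : dist (q.2 j) (p.2 j) ≤ dist q.2 p.2 := dist_le_pi_dist _ _ j
        have h3 : dist q.2 p.2 ≤ dist q p := by
          rw [Prod.dist_eq]; exact le_max_right _ _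
        rw [Real.dist_eq, hj, sub_zero] at h2
        calc q.2 j ≤ |q.2 j| := le_abs_self _
          _ < η := lt_of_le_of_lt (h2.trans h3) hdist
      have h4 : 0 ≤ R d q.1 q.2 := hnonneg q.1 q.2 hq'
      have h5 : R d q.1 q.2 ≤ q.2 j := hle q.1 q.2 hq' j
      show dist (R d q.1 q.2) (R d p.1 p.2) < η
      rw [Real.dist_eq, hRp, sub_zero, abs_of_nonneg h4]
      linarith
    · -- all coordinates positive
      push_neg at h0
      have hpos : ∀ j, 0 < p.2 j := fun j => lt_of_le_of_ne (hp' j) (Ne.symm (h0 j))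
      have hne : Nonempty (Fin d) := ⟨⟨0, by omega⟩⟩
      have hM0 : 0 < ∑ j, p.2 j := Finset.sum_pos (fun j _ => hpos j) Finset.univ_nonempty
      have hxM : ∀ j, p.2 j ≤ ∑ j, p.2 j := fun j =>
        Finset.single_le_sum (fun i _ => hp' i) (Finset.mem_univ j)
      -- choose ε
      obtain ⟨ε, hgε, hhalf, hε1, hε2⟩ : ∃ ε : ℝ,
          ((Real.exp (c₁ * ε ^ 2) - 1) * ∑ j, p.2 j)
            + (c₂ * ε ^ 2 * Real.exp (c₁ * ε ^ 2) / (1 - c₂ * ε ^ 2)) * (∑ j, p.2 j) < η / 2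
          ∧ c₂ * ε ^ 2 ≤ 1/2 ∧ 0 < ε ∧ ε ≤ ε₀ := by
        have hgc : ContinuousAt (fun ε : ℝ => ((Real.exp (c₁ * ε ^ 2) - 1) * ∑ j, p.2 j)
            + (c₂ * ε ^ 2 * Real.exp (c₁ * ε ^ 2) / (1 - c₂ * ε ^ 2)) * (∑ j, p.2 j)) 0 := by
          apply ContinuousAt.add
          · fun_prop
          · apply ContinuousAt.mul _ continuousAt_const
            exact ContinuousAt.div (by fun_prop) (by fun_prop) (by norm_num)
        have hg0 : (fun ε : ℝ => ((Real.exp (c₁ * ε ^ 2) - 1) * ∑ j, p.2 j)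
            + (c₂ * ε ^ 2 * Real.exp (c₁ * ε ^ 2) / (1 - c₂ * ε ^ 2)) * (∑ j, p.2 j)) 0 = 0 := by
          norm_num
        have h1 : ∀ᶠ ε in 𝓝 (0:ℝ), ((Real.exp (c₁ * ε ^ 2) - 1) * ∑ j, p.2 j)
            + (c₂ * ε ^ 2 * Real.exp (c₁ * ε ^ 2) / (1 - c₂ * ε ^ 2)) * (∑ j, p.2 j) < η / 2 := by
          have h2 : Tendsto (fun ε : ℝ => ((Real.exp (c₁ * ε ^ 2) - 1) * ∑ j, p.2 j)
              + (c₂ * ε ^ 2 * Real.exp (c₁ * ε ^ 2) / (1 - c₂ * ε ^ 2)) * (∑ j, p.2 j))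
              (𝓝 0) (𝓝 0) := by
            have h4 := hgc.tendsto
            convert h4 using 2
            norm_num
          exact h2.eventually (gt_mem_nhds (by positivity))
        have hc2t : Tendsto (fun ε : ℝ => c₂ * ε ^ 2) (𝓝 0) (𝓝 0) := by
          have hco : Continuous fun ε : ℝ => c₂ * ε ^ 2 := by fun_prop
          simpa using hco.tendsto 0
        have h2 : ∀ᶠ ε in 𝓝 (0:ℝ), c₂ * ε ^ 2 < 1/2 :=
          hc2t.eventually (gt_mem_nhds (by norm_num))
        have h3 : ∀ᶠ ε in 𝓝[>] (0:ℝ), ε ∈ Ioc (0:ℝ) ε₀ :=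
          Ioc_mem_nhdsGT_of_mem ⟨le_refl _, hε₀⟩
        obtain ⟨ε, hg, hhalf', hmem⟩ :=
          (((h1.filter_mono nhdsWithin_le_nhds).and
            ((h2.filter_mono nhdsWithin_le_nhds).and h3)).exists)
        exact ⟨ε, hg, hhalf'.le, hmem.1, hmem.2⟩
      -- set up the neighbourhood
      have hKnn : 0 ≤ c₂ * ε ^ 2 * Real.exp (c₁ * ε ^ 2) / (1 - c₂ * ε ^ 2) := by
        have : (0:ℝ) < 1 - c₂ * ε ^ 2 := by linarith
        positivity
      have hec1 : 1 ≤ Real.exp (c₁ * ε ^ 2) := Real.one_le_exp (by positivity)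
      set θ := min (1/2 : ℝ) (η / (4 * ∑ j, p.2 j)) with hθ
      have hθpos : 0 < θ := lt_min (by norm_num) (by positivity)
      have hθ1 : θ ≤ 1/2 := min_le_left _ _
      have hθ2 : θ ≤ η / (4 * ∑ j, p.2 j) := min_le_right _ _
      have hμ : ∃ μ : ℝ, 0 < μ ∧ ∀ j, μ ≤ p.2 j := by
        refine ⟨Finset.univ.inf' Finset.univ_nonempty p.2, ?_, ?_⟩
        · exact (Finset.lt_inf'_iff _).mpr fun j _ => hpos j
        · exact fun j => Finset.inf'_le _ (Finset.mem_univ j)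
      obtain ⟨μ, hμpos, hμle⟩ := hμ
      refine ⟨min (δf ε) (θ * μ), lt_min (hδf ε ⟨hε1, hε2⟩) (by positivity), ?_⟩
      intro q hq hdist
      have hq' : ∀ j, 0 ≤ q.2 j := hq
      have hdt : ∀ j, dist (q.1 j) (p.1 j) ≤ δf ε := by
        intro j
        calc dist (q.1 j) (p.1 j) ≤ dist q.1 p.1 := dist_le_pi_dist _ _ j
          _ ≤ dist q p := by rw [Prod.dist_eq]; exact le_max_left _ _
          _ ≤ δf ε := le_trans hdist.le (min_le_left _ _)
      have hdt' : ∀ j, dist (p.1 j) (q.1 j) ≤ δf ε := fun j => by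
        rw [dist_comm]; exact hdt j
      have hdx : ∀ j, |q.2 j - p.2 j| ≤ θ * p.2 j := by
        intro j
        calc |q.2 j - p.2 j| = dist (q.2 j) (p.2 j) := (Real.dist_eq _ _).symm
          _ ≤ dist q.2 p.2 := dist_le_pi_dist _ _ j
          _ ≤ dist q p := by rw [Prod.dist_eq]; exact le_max_right _ _
          _ ≤ θ * μ := le_trans hdist.le (min_le_right _ _)
          _ ≤ θ * p.2 j := mul_le_mul_of_nonneg_left (hμle j) hθpos.le
      -- continuity in x (scaling)
      have hupper : R d q.1 q.2 ≤ (1 + θ) * R d q.1 p.2 := by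
        have h1 : ∀ j, q.2 j ≤ (1 + θ) * p.2 j := by
          intro j
          have h2 := abs_le.mp (hdx j)
          nlinarith [hpos j]
        calc R d q.1 q.2 ≤ R d q.1 (fun j => (1 + θ) * p.2 j) :=
              hmono q.1 q.2 _ hq' (fun j => by nlinarith [hpos j]) h1
          _ = (1 + θ) * R d q.1 p.2 := hhom q.1 p.2 hp' (1 + θ) (by linarith)
      have hlower : (1 - θ) * R d q.1 p.2 ≤ R d q.1 q.2 := by
        have h1 : ∀ j, (1 - θ) * p.2 j ≤ q.2 j := by
          intro j
          have h2 := abs_le.mp (hdx j)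
          nlinarith [hpos j]
        calc (1 - θ) * R d q.1 p.2 = R d q.1 (fun j => (1 - θ) * p.2 j) :=
              (hhom q.1 p.2 hp' (1 - θ) (by linarith)).symm
          _ ≤ R d q.1 q.2 :=
              hmono q.1 _ q.2 (fun j => by nlinarith [hpos j]) hq' h1
      have hRqp : R d q.1 p.2 ≤ ∑ j, p.2 j :=
        le_trans (hle q.1 p.2 hp' ⟨0, by omega⟩) (hxM _)
      have hRqp0 : 0 ≤ R d q.1 p.2 := hnonneg q.1 p.2 hp'
      have hRpp : R d p.1 p.2 ≤ ∑ j, p.2 j :=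
        le_trans (hle p.1 p.2 hp' ⟨0, by omega⟩) (hxM _)
      have hRpp0 : 0 ≤ R d p.1 p.2 := hnonneg p.1 p.2 hp'
      have hb1 : |R d q.1 q.2 - R d q.1 p.2| ≤ θ * ∑ j, p.2 j := by
        rw [abs_le]
        constructor
        · nlinarith [hlower, hRqp, hRqp0]
        · nlinarith [hupper, hRqp, hRqp0]
      -- continuity in t
      have hBf := hB ε hε1 hε2 hhalf p.1 q.1 hdt' p.2 hp'
      have hBb := hB ε hε1 hε2 hhalf q.1 p.1 hdt p.2 hp'
      have hb2 : |R d q.1 p.2 - R d p.1 p.2|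
          ≤ (Real.exp (c₁ * ε ^ 2) - 1) * (∑ j, p.2 j)
            + (c₂ * ε ^ 2 * Real.exp (c₁ * ε ^ 2) / (1 - c₂ * ε ^ 2)) * (∑ j, p.2 j) := by
        rw [abs_le]
        constructor
        · nlinarith [hBb, hRqp, hRqp0]
        · nlinarith [hBf, hRpp, hRpp0]
      show dist (R d q.1 q.2) (R d p.1 p.2) < η
      rw [Real.dist_eq]
      have htri : |R d q.1 q.2 - R d p.1 p.2|
          ≤ |R d q.1 q.2 - R d q.1 p.2| + |R d q.1 p.2 - R d p.1 p.2| :=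
        abs_sub_le _ _ _
      have hθM : θ * (∑ j, p.2 j) ≤ η / 4 := by
        have h2 : θ * (∑ j, p.2 j) ≤ (η / (4 * ∑ j, p.2 j)) * (∑ j, p.2 j) :=
          mul_le_mul_of_nonneg_right hθ2 hM0.le
        have h3 : (η / (4 * ∑ j, p.2 j)) * (∑ j, p.2 j) = η / 4 := by
          field_simp
        linarith
      have hgM : (Real.exp (c₁ * ε ^ 2) - 1) * (∑ j, p.2 j)
            + (c₂ * ε ^ 2 * Real.exp (c₁ * ε ^ 2) / (1 - c₂ * ε ^ 2)) * (∑ j, p.2 j)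
          < η / 2 := hgε
      linarith [htri, hb1, hb2]
  exact hcw
end

section
/- Let (Ω, 𝓕, P) be a probability space, T a nonempty set, and U : T → Ω → ℝ a family of random variables such that for every t ∈ T the random variable U(t) is uniformly distributed on the interval (0,1). Assume that for every integer m ≥ 1, every t ∈ T^m and every x ∈ [0,∞)^m the tail-copula limit R_t(x) = lim_{s↓0} s⁻¹ P[U(t₁) ≤ s·x₁, …, U(t_m) ≤ s·x_m] exists. Then for every d ≥ 1, every t ∈ T^d and all x₁, x₂ ∈ [0,∞)^d: (i) R_{(t,t)}(x₁, x₂) = R_t(x₁ ∧ x₂), where (t,t) ∈ T^{2d} is the duplicated tuple and x₁ ∧ x₂ is the coordinatewise minimum; and (ii) R_t(x₁) − 2·R_t(x₁ ∧ x₂) + R_t(x₂) ≤ 2·Σ_{j=1}^d |x₁ⱼ − x₂ⱼ|; in particular the standard deviation semimetric satisfies ρ₂((t,x₁),(t,x₂)) = (R_t(x₁) − 2·R_{(t,t)}(x₁,x₂) + R_t(x₂))^{1/2} ≤ √2 · (Σ_{j=1}^d |x₁ⱼ − x₂ⱼ|)^{1/2}. -/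
open MeasureTheory Filter Set Topology

/-- Identity `R_{(t,t)}(x₁,x₂) = R_t(x₁ ∧ x₂)` and the resulting bound on the
standard deviation semimetric in the `x`-argument. -/
theorem empirical_tail_copulas_stmt15
    {Ω : Type*} [MeasurableSpace Ω] (P : Measure Ω) [IsProbabilityMeasure P]
    {T : Type*} [Nonempty T] (U : T → Ω → ℝ)
    (hunif : ∀ t : T, ∀ x ∈ Icc (0:ℝ) 1, P {ω | U t ω ≤ x} = ENNReal.ofReal x)
    (R : ∀ m : ℕ, (Fin m → T) → (Fin m → ℝ) → ℝ)
    (hR : ∀ m : ℕ, 1 ≤ m → ∀ (t : Fin m → T) (x : Fin m → ℝ), (∀ j, 0 ≤ x j) →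
      Tendsto (fun s : ℝ => (P {ω | ∀ j, U (t j) ω ≤ s * x j}).toReal / s)
        (𝓝[>] (0:ℝ)) (𝓝 (R m t x)))
    (d : ℕ) (hd : 1 ≤ d) (t : Fin d → T) (x₁ x₂ : Fin d → ℝ)
    (hx₁ : ∀ j, 0 ≤ x₁ j) (hx₂ : ∀ j, 0 ≤ x₂ j) :
    R (d + d) (Fin.append t t) (Fin.append x₁ x₂)
        = R d t (fun j => min (x₁ j) (x₂ j)) ∧
      R d t x₁ - 2 * R d t (fun j => min (x₁ j) (x₂ j)) + R d t x₂
        ≤ 2 * ∑ j, |x₁ j - x₂ j| ∧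
      Real.sqrt (R d t x₁ - 2 * R (d + d) (Fin.append t t) (Fin.append x₁ x₂) + R d t x₂)
        ≤ Real.sqrt 2 * Real.sqrt (∑ j, |x₁ j - x₂ j|) := by
  -- R is nonnegative
  have key_nonneg : ∀ m, 1 ≤ m → ∀ (t : Fin m → T) (x : Fin m → ℝ), (∀ j, 0 ≤ x j) →
      0 ≤ R m t x := by
    intro m hm t x hx
    refine ge_of_tendsto (hR m hm t x hx) ?_
    filter_upwards [self_mem_nhdsWithin] with s hs
    have hs' : (0:ℝ) < s := hs
    positivity
  -- R is bounded above by each coordinate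
  have key_coord : ∀ m, 1 ≤ m → ∀ (t : Fin m → T) (x : Fin m → ℝ), (∀ j, 0 ≤ x j) →
      ∀ j, R m t x ≤ x j := by
    intro m hm t x hx j
    refine le_of_tendsto (hR m hm t x hx) ?_
    have hxj := hx j
    have hδ : (0:ℝ) < 1 / (x j + 1) := by positivity
    filter_upwards [Ioo_mem_nhdsGT_of_mem ⟨le_refl (0:ℝ), hδ⟩] with s hs
    obtain ⟨hs0, hs1⟩ := hs
    have hx1 : s * (x j + 1) < 1 := (lt_div_iff₀ (by positivity : (0:ℝ) < x j + 1)).mp hs1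
    have hsx : s * x j ∈ Icc (0:ℝ) 1 := by
      constructor
      · have := hx j; positivity
      · nlinarith [hx j]
    have hsub : {ω | ∀ k, U (t k) ω ≤ s * x k} ⊆ {ω | U (t j) ω ≤ s * x j} :=
      fun ω h => h j
    have hle := measure_mono (μ := P) hsub
    rw [hunif (t j) _ hsx] at hle
    have h2 : (P {ω | ∀ k, U (t k) ω ≤ s * x k}).toReal ≤ s * x j := by
      have h3 := ENNReal.toReal_mono ENNReal.ofReal_ne_top hle
      rwa [ENNReal.toReal_ofReal (by have := hx j; positivity)] at h3
    rw [div_le_iff₀ hs0]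
    linarith
  -- R is monotone in x
  have key_mono : ∀ m, 1 ≤ m → ∀ (t : Fin m → T) (x y : Fin m → ℝ), (∀ j, 0 ≤ x j) →
      (∀ j, 0 ≤ y j) → (∀ j, x j ≤ y j) → R m t x ≤ R m t y := by
    intro m hm t x y hx hy hxy
    refine le_of_tendsto_of_tendsto (hR m hm t x hx) (hR m hm t y hy) ?_
    filter_upwards [self_mem_nhdsWithin] with s hs
    have hs' : (0:ℝ) < s := hs
    have hsub : {ω | ∀ j, U (t j) ω ≤ s * x j} ⊆ {ω | ∀ j, U (t j) ω ≤ s * y j} :=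
      fun ω h j => (h j).trans (mul_le_mul_of_nonneg_left (hxy j) hs'.le)
    have h2 : (P {ω | ∀ j, U (t j) ω ≤ s * x j}).toReal
        ≤ (P {ω | ∀ j, U (t j) ω ≤ s * y j}).toReal :=
      ENNReal.toReal_mono (measure_ne_top P _) (measure_mono hsub)
    exact (div_le_div_iff_of_pos_right hs').mpr h2
  -- R is positively homogeneous in x
  have key_homog : ∀ m, 1 ≤ m → ∀ (t : Fin m → T) (x : Fin m → ℝ), (∀ j, 0 ≤ x j) →
      ∀ c : ℝ, 0 < c → R m t (fun j => c * x j) = c * R m t x := by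
    intro m hm t x hx c hc
    have hmap : Tendsto (fun s : ℝ => c * s) (𝓝[>] 0) (𝓝[>] 0) := by
      apply tendsto_nhdsWithin_of_tendsto_nhds_of_eventually_within
      · have h0 : Tendsto (fun s : ℝ => c * s) (𝓝 0) (𝓝 (c * 0)) :=
          (continuous_const.mul continuous_id).tendsto 0
        simpa using h0.mono_left (nhdsWithin_le_nhds (s := Ioi (0:ℝ)))
      · filter_upwards [self_mem_nhdsWithin] with s hs
        exact mul_pos hc hs
    have h1 : Tendsto
        (fun s : ℝ => (P {ω | ∀ j, U (t j) ω ≤ c * s * x j}).toReal / (c * s))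
        (𝓝[>] (0:ℝ)) (𝓝 (R m t x)) := (hR m hm t x hx).comp hmap
    have h2 := h1.const_mul c
    have h3 : (fun s : ℝ => c * ((P {ω | ∀ j, U (t j) ω ≤ c * s * x j}).toReal / (c * s)))
        =ᶠ[𝓝[>] (0:ℝ)]
        (fun s : ℝ => (P {ω | ∀ j, U (t j) ω ≤ s * (c * x j)}).toReal / s) := by
      filter_upwards [self_mem_nhdsWithin] with s hs
      have hs' : (0:ℝ) < s := hs
      have hset : {ω | ∀ j, U (t j) ω ≤ c * s * x j}
          = {ω | ∀ j, U (t j) ω ≤ s * (c * x j)} := by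
        ext ω
        simp only [Set.mem_setOf_eq]
        refine forall_congr' fun j => ?_
        rw [show c * s * x j = s * (c * x j) by ring]
      rw [hset, ← mul_div_assoc, mul_div_mul_left _ _ hc.ne']
    exact tendsto_nhds_unique
      (hR m hm t (fun j => c * x j) (fun j => by have := hx j; positivity))
      (h2.congr' h3)
  -- ℓ¹-Lipschitz bound for R
  have key_lip : ∀ m, 1 ≤ m → ∀ (t : Fin m → T) (x y : Fin m → ℝ), (∀ j, 0 ≤ y j) →
      (∀ j, y j ≤ x j) → R m t x ≤ R m t y + ∑ j, (x j - y j) := by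
    intro m hm t x y hy hyx
    have hx : ∀ j, 0 ≤ x j := fun j => (hy j).trans (hyx j)
    have hterm : ∀ j ∈ Finset.univ, (0:ℝ) ≤ x j - y j :=
      fun j _ => sub_nonneg.mpr (hyx j)
    by_cases h0 : ∃ j₀, y j₀ = 0
    · obtain ⟨j₀, hj₀⟩ := h0
      have h1 : R m t x ≤ x j₀ := key_coord m hm t x hx j₀
      have h2 : 0 ≤ R m t y := key_nonneg m hm t y hy
      have h3 : x j₀ - y j₀ ≤ ∑ j, (x j - y j) :=
        Finset.single_le_sum hterm (Finset.mem_univ j₀)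
      rw [hj₀] at h3
      linarith
    · push_neg at h0
      have hy' : ∀ j, 0 < y j := fun j => (hy j).lt_of_ne (Ne.symm (h0 j))
      haveI : Nonempty (Fin m) := Fin.pos_iff_nonempty.mp hm
      obtain ⟨j₀, -, hj₀⟩ :=
        Finset.univ.exists_max_image (fun j => (x j - y j) / y j) Finset.univ_nonempty
      set c := (x j₀ - y j₀) / y j₀ with hc
      have hc0 : 0 ≤ c := div_nonneg (sub_nonneg.mpr (hyx j₀)) (hy' j₀).le
      have hstep : ∀ j, x j ≤ (1 + c) * y j := by
        intro j
        have hj := hj₀ j (Finset.mem_univ j)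
        have hj2 : x j - y j ≤ c * y j := (div_le_iff₀ (hy' j)).mp hj
        rw [add_mul, one_mul]
        linarith
      have hmono := key_mono m hm t x (fun j => (1 + c) * y j) hx
        (fun j => by have := hy j; positivity) hstep
      have hhom := key_homog m hm t y hy (1 + c) (by linarith)
      have hcoordy := key_coord m hm t y hy j₀
      have hsum : x j₀ - y j₀ ≤ ∑ j, (x j - y j) :=
        Finset.single_le_sum hterm (Finset.mem_univ j₀)
      have hcy : c * R m t y ≤ c * y j₀ := mul_le_mul_of_nonneg_left hcoordy hc0
      have hcyv : c * y j₀ = x j₀ - y j₀ := by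
        rw [hc, div_mul_cancel₀ _ (hy' j₀).ne']
      calc R m t x ≤ R m t (fun j => (1 + c) * y j) := hmono
        _ = (1 + c) * R m t y := hhom
        _ = R m t y + c * R m t y := by ring
        _ ≤ R m t y + ∑ j, (x j - y j) := by linarith
  -- the coordinatewise minimum
  set xm : Fin d → ℝ := fun j => min (x₁ j) (x₂ j) with hxm_def
  have hxm : ∀ j, 0 ≤ xm j := fun j => le_min (hx₁ j) (hx₂ j)
  have happ_nonneg : ∀ j : Fin (d + d), 0 ≤ Fin.append x₁ x₂ j := by
    intro j
    refine Fin.addCases (motive := fun j => 0 ≤ Fin.append x₁ x₂ j) ?_ ?_ j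
    · intro i; rw [Fin.append_left]; exact hx₁ i
    · intro i; rw [Fin.append_right]; exact hx₂ i
  -- part (i)
  have hi : R (d + d) (Fin.append t t) (Fin.append x₁ x₂) = R d t xm := by
    have hsets : ∀ s : ℝ, 0 < s →
        {ω | ∀ j, U (Fin.append t t j) ω ≤ s * Fin.append x₁ x₂ j}
          = {ω | ∀ j, U (t j) ω ≤ s * xm j} := by
      intro s hs
      ext ω
      simp only [Set.mem_setOf_eq]
      constructor
      · intro h j
        have h1 := h (Fin.castAdd d j)
        have h2 := h (Fin.natAdd d j)
        rw [Fin.append_left, Fin.append_left] at h1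
        rw [Fin.append_right, Fin.append_right] at h2
        have hmin : s * xm j = min (s * x₁ j) (s * x₂ j) :=
          mul_min_of_nonneg _ _ hs.le
        rw [hmin]
        exact le_min h1 h2
      · intro h j
        refine Fin.addCases
          (motive := fun j => U (Fin.append t t j) ω ≤ s * Fin.append x₁ x₂ j) ?_ ?_ j
        · intro i
          rw [Fin.append_left, Fin.append_left]
          exact (h i).trans (mul_le_mul_of_nonneg_left (min_le_left _ _) hs.le)
        · intro i
          rw [Fin.append_right, Fin.append_right]
          exact (h i).trans (mul_le_mul_of_nonneg_left (min_le_right _ _) hs.le)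
    have heq : (fun s : ℝ =>
          (P {ω | ∀ j, U (Fin.append t t j) ω ≤ s * Fin.append x₁ x₂ j}).toReal / s)
        =ᶠ[𝓝[>] (0:ℝ)]
        (fun s : ℝ => (P {ω | ∀ j, U (t j) ω ≤ s * xm j}).toReal / s) := by
      filter_upwards [self_mem_nhdsWithin] with s hs
      rw [hsets s hs]
    exact tendsto_nhds_unique
      ((hR (d + d) (by omega) (Fin.append t t) (Fin.append x₁ x₂) happ_nonneg).congr' heq)
      (hR d hd t xm hxm)
  -- part (ii)
  have l1 : R d t x₁ ≤ R d t xm + ∑ j, (x₁ j - xm j) :=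
    key_lip d hd t x₁ xm hxm (fun j => min_le_left _ _)
  have l2 : R d t x₂ ≤ R d t xm + ∑ j, (x₂ j - xm j) :=
    key_lip d hd t x₂ xm hxm (fun j => min_le_right _ _)
  have hsum : (∑ j, (x₁ j - xm j)) + (∑ j, (x₂ j - xm j)) = ∑ j, |x₁ j - x₂ j| := by
    rw [← Finset.sum_add_distrib]
    refine Finset.sum_congr rfl fun j _ => ?_
    simp only [hxm_def]
    rcases le_total (x₁ j) (x₂ j) with h | h
    · rw [min_eq_left h, abs_of_nonpos (by linarith)]; ring
    · rw [min_eq_right h, abs_of_nonneg (by linarith)]; ring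
  have habs : 0 ≤ ∑ j, |x₁ j - x₂ j| := Finset.sum_nonneg fun j _ => abs_nonneg _
  have hii : R d t x₁ - 2 * R d t xm + R d t x₂ ≤ 2 * ∑ j, |x₁ j - x₂ j| := by
    linarith
  refine ⟨hi, hii, ?_⟩
  rw [hi]
  calc Real.sqrt (R d t x₁ - 2 * R d t xm + R d t x₂)
      ≤ Real.sqrt (2 * ∑ j, |x₁ j - x₂ j|) := Real.sqrt_le_sqrt hii
    _ = Real.sqrt 2 * Real.sqrt (∑ j, |x₁ j - x₂ j|) := Real.sqrt_mul (by norm_num) _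
end

section
/- Let Z be a standard normal random variable, let u, v ∈ ℝ with u ≠ v, set a = |u − v|, and let x, y > 0. Then E[ min( x·exp(u·Z − u²/2), y·exp(v·Z − v²/2) ) ] = x·(1 − Φ(a/2 + a⁻¹·log(x/y))) + y·(1 − Φ(a/2 + a⁻¹·log(y/x))), where Φ denotes the cumulative distribution function of the standard normal distribution on ℝ. -/
open MeasureTheory Filter Set Topology ProbabilityTheory

open scoped ENNReal NNReal

lemma pdf_tilt (w z : ℝ) :
    Real.exp (w * z - w ^ 2 / 2) * gaussianPDFReal 0 1 z = gaussianPDFReal w 1 z := by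
  simp only [gaussianPDFReal, NNReal.coe_one, mul_one, sub_zero, ← Real.exp_add]
  rw [mul_comm, mul_assoc]
  congr 1
  rw [← Real.exp_add]
  congr 1
  ring

lemma gauss_withDensity :
    gaussianReal 0 1 = volume.withDensity (fun z => ((gaussianPDFReal 0 1 z).toNNReal : ℝ≥0∞)) := by
  rw [gaussianReal_of_var_ne_zero 0 one_ne_zero]
  rfl

lemma tilt_set (w : ℝ) {s : Set ℝ} (hs : MeasurableSet s) :
    ∫ z in s, Real.exp (w * z - w ^ 2 / 2) ∂(gaussianReal 0 1)
      = ((gaussianReal w 1) s).toReal := by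
  rw [gauss_withDensity, setIntegral_withDensity_eq_setIntegral_smul
    (measurable_gaussianPDFReal 0 1).real_toNNReal _ hs,
    gaussianReal_apply_eq_integral w one_ne_zero s]
  rw [ENNReal.toReal_ofReal (setIntegral_nonneg hs fun z _ => gaussianPDFReal_nonneg w 1 z)]
  apply setIntegral_congr_fun hs
  intro z _
  show ((gaussianPDFReal 0 1 z).toNNReal : ℝ≥0) • Real.exp (w * z - w ^ 2 / 2) = _
  rw [NNReal.smul_def, smul_eq_mul, Real.coe_toNNReal _ (gaussianPDFReal_nonneg 0 1 z),
    mul_comm, pdf_tilt]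

lemma gauss_shift (w c : ℝ) :
    (gaussianReal w 1) (Iic c) = (gaussianReal 0 1) (Iic (c - w)) := by
  have h := gaussianReal_map_add_const (μ := 0) (v := 1) w
  rw [zero_add] at h
  rw [← h, Measure.map_apply (measurable_add_const w) measurableSet_Iic]
  congr 1
  ext z
  simp [sub_eq_iff_eq_add, le_sub_iff_add_le]

lemma gauss_singleton (t : ℝ) : (gaussianReal 0 1) {t} = 0 :=
  gaussianReal_absolutelyContinuous 0 one_ne_zero (Real.volume_singleton)

lemma gauss_symm (t : ℝ) :
    ((gaussianReal 0 1) (Iic (-t))).toReal = 1 - ((gaussianReal 0 1) (Iic t)).toReal := by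
  have hmap : Measure.map (fun z : ℝ => -1 * z) (gaussianReal 0 1) = gaussianReal 0 1 := by
    have := gaussianReal_map_const_mul (μ := 0) (v := 1) (-1)
    simpa using this
  have h1 : (gaussianReal 0 1) (Iic (-t)) = (gaussianReal 0 1) (Ici t) := by
    conv_lhs => rw [← hmap]
    rw [Measure.map_apply (by fun_prop) measurableSet_Iic]
    congr 1
    ext z
    simp [neg_le, le_neg]
  have h2 : (gaussianReal 0 1) (Ici t) = (gaussianReal 0 1) (Ioi t) := by
    rw [← Ioi_union_left, measure_union (by simp) (measurableSet_singleton t),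
      gauss_singleton, add_zero]
  have h3 : (gaussianReal 0 1) (Ioi t) = 1 - (gaussianReal 0 1) (Iic t) := by
    rw [← compl_Iic]
    exact prob_compl_eq_one_sub measurableSet_Iic
  rw [h1, h2, h3, ENNReal.toReal_sub_of_le prob_le_one ENNReal.one_ne_top, ENNReal.toReal_one]

lemma integrable_tilt (w : ℝ) :
    Integrable (fun z => Real.exp (w * z - w ^ 2 / 2)) (gaussianReal 0 1) := by
  rw [gauss_withDensity,
    integrable_withDensity_iff_integrable_smul (measurable_gaussianPDFReal 0 1).real_toNNReal]
  refine (integrable_gaussianPDFReal w 1).congr (Eventually.of_forall fun z => ?_)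
  symm
  show ((gaussianPDFReal 0 1 z).toNNReal : ℝ≥0) • Real.exp (w * z - w ^ 2 / 2) = _
  rw [NNReal.smul_def, smul_eq_mul, Real.coe_toNNReal _ (gaussianPDFReal_nonneg 0 1 z),
    mul_comm, pdf_tilt]

lemma key (u v : ℝ) (h : v < u) (x y : ℝ) (hx : 0 < x) (hy : 0 < y) :
    ∫ z, min (x * Real.exp (u * z - u ^ 2 / 2)) (y * Real.exp (v * z - v ^ 2 / 2))
        ∂(gaussianReal 0 1)
      = x * (1 - ((gaussianReal 0 1)
              (Iic ((u - v) / 2 + (u - v)⁻¹ * Real.log (x / y)))).toReal)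
        + y * (1 - ((gaussianReal 0 1)
              (Iic ((u - v) / 2 + (u - v)⁻¹ * Real.log (y / x)))).toReal) := by
  set a : ℝ := u - v with ha_def
  have ha : 0 < a := sub_pos.mpr h
  set c : ℝ := (Real.log (y / x) + (u ^ 2 - v ^ 2) / 2) / a with hc_def
  set f : ℝ → ℝ := fun z => x * Real.exp (u * z - u ^ 2 / 2) with hf
  set g : ℝ → ℝ := fun z => y * Real.exp (v * z - v ^ 2 / 2) with hg
  have hlogxy : Real.log (x / y) = - Real.log (y / x) := by
    rw [← Real.log_inv, inv_div]
  have hcrit : ∀ z, f z ≤ g z ↔ z ≤ c := by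
    intro z
    rw [hf, hg]
    rw [← Real.log_le_log_iff (by positivity) (by positivity),
      Real.log_mul hx.ne' (Real.exp_pos _).ne', Real.log_mul hy.ne' (Real.exp_pos _).ne',
      Real.log_exp, Real.log_exp, hc_def, le_div_iff₀ ha,
      Real.log_div hy.ne' hx.ne']
    constructor <;> intro h' <;> nlinarith
  have hmin : ∀ z, min (f z) (g z)
      = (Iic c).indicator f z + (Ioi c).indicator g z := by
    intro z
    rcases le_or_gt z c with hz | hz
    · rw [min_eq_left ((hcrit z).mpr hz), indicator_of_mem (by exact hz),
        indicator_of_notMem (by simpa using hz), add_zero]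
    · rw [min_eq_right (le_of_lt (lt_of_not_ge fun hle => absurd ((hcrit z).mp hle)
        (not_le.mpr hz))),
        indicator_of_notMem (by simpa using hz), indicator_of_mem (by exact hz), zero_add]
  have hintf : Integrable f (gaussianReal 0 1) := (integrable_tilt u).const_mul x
  have hintg : Integrable g (gaussianReal 0 1) := (integrable_tilt v).const_mul y
  calc ∫ z, min (f z) (g z) ∂(gaussianReal 0 1)
      = ∫ z, ((Iic c).indicator f z + (Ioi c).indicator g z) ∂(gaussianReal 0 1) :=
        integral_congr_ae (Eventually.of_forall hmin)
    _ = (∫ z, (Iic c).indicator f z ∂(gaussianReal 0 1))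
        + ∫ z, (Ioi c).indicator g z ∂(gaussianReal 0 1) :=
        integral_add (hintf.indicator measurableSet_Iic) (hintg.indicator measurableSet_Ioi)
    _ = (∫ z in Iic c, f z ∂(gaussianReal 0 1)) + ∫ z in Ioi c, g z ∂(gaussianReal 0 1) := by
        rw [integral_indicator measurableSet_Iic, integral_indicator measurableSet_Ioi]
    _ = x * ((gaussianReal 0 1) (Iic (c - u))).toReal
        + y * ((gaussianReal v 1) (Ioi c)).toReal := by
        rw [hf, hg, integral_const_mul, integral_const_mul, tilt_set u measurableSet_Iic,
          tilt_set v measurableSet_Ioi, gauss_shift]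
    _ = x * (1 - ((gaussianReal 0 1) (Iic (a / 2 + a⁻¹ * Real.log (x / y)))).toReal)
        + y * (1 - ((gaussianReal 0 1) (Iic (c - v))).toReal) := by
        have hcu : c - u = -(a / 2 + a⁻¹ * Real.log (x / y)) := by
          rw [hlogxy, hc_def, ha_def]
          have hne : u - v ≠ 0 := sub_ne_zero.mpr h.ne'
          field_simp
          ring
        have hIoi : ((gaussianReal v 1) (Ioi c)).toReal
            = 1 - ((gaussianReal v 1) (Iic c)).toReal := by
          rw [← compl_Iic, prob_compl_eq_one_sub measurableSet_Iic,
            ENNReal.toReal_sub_of_le prob_le_one ENNReal.one_ne_top, ENNReal.toReal_one]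
        rw [hcu, gauss_symm, hIoi, gauss_shift v c]
    _ = _ := by
        have hcv : c - v = a / 2 + a⁻¹ * Real.log (y / x) := by
          rw [hc_def, ha_def]
          have hne : u - v ≠ 0 := sub_ne_zero.mpr h.ne'
          field_simp
          ring
        rw [hcv]

/-- The bivariate Hüsler–Reiss tail copula of the one-dimensional Smith model. -/
theorem empirical_tail_copulas_stmt16
    {Ω : Type*} [MeasurableSpace Ω] (P : Measure Ω) [IsProbabilityMeasure P]
    (Z : Ω → ℝ) (hZmeas : Measurable Z)
    (hZ : Measure.map Z P = gaussianReal 0 1)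
    (u v : ℝ) (huv : u ≠ v) (x y : ℝ) (hx : 0 < x) (hy : 0 < y) :
    ∫ ω, min (x * Real.exp (u * Z ω - u ^ 2 / 2))
             (y * Real.exp (v * Z ω - v ^ 2 / 2)) ∂P
      = x * (1 - ((gaussianReal 0 1)
              (Iic (|u - v| / 2 + |u - v|⁻¹ * Real.log (x / y)))).toReal)
        + y * (1 - ((gaussianReal 0 1)
              (Iic (|u - v| / 2 + |u - v|⁻¹ * Real.log (y / x)))).toReal) := by
  have hmap : ∫ ω, min (x * Real.exp (u * Z ω - u ^ 2 / 2))
      (y * Real.exp (v * Z ω - v ^ 2 / 2)) ∂P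
      = ∫ z, min (x * Real.exp (u * z - u ^ 2 / 2))
          (y * Real.exp (v * z - v ^ 2 / 2)) ∂(gaussianReal 0 1) := by
    rw [← hZ, integral_map hZmeas.aemeasurable]
    exact Continuous.aestronglyMeasurable (by fun_prop)
  rw [hmap]
  rcases lt_or_gt_of_ne huv with h | h
  · -- u < v
    have habs : |u - v| = v - u := by rw [abs_sub_comm]; exact abs_of_pos (sub_pos.mpr h)
    have hswap : ∀ z : ℝ, min (x * Real.exp (u * z - u ^ 2 / 2))
        (y * Real.exp (v * z - v ^ 2 / 2))
        = min (y * Real.exp (v * z - v ^ 2 / 2)) (x * Real.exp (u * z - u ^ 2 / 2)) :=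
      fun z => min_comm _ _
    simp only [hswap, habs]
    rw [key v u h y x hy hx, add_comm]
  · -- v < u
    have habs : |u - v| = u - v := abs_of_pos (sub_pos.mpr h)
    rw [habs, key u v h x y hx hy]
end
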